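/- arXiv:1412.1110 — 6 statements merged into one kernel-verified Lean document; each statement's English description precedes it below -/
import Mathlib

section
/- For all integers m, n, r ≥ 0, the r-Bell numbers satisfy B^{(r)}(m+n) = Σ_{i=0}^{n} Σ_{j=0}^{m} (j+r)^{n-i} · C(n,i) · S^{(r)}(m,j) · B(i), where C(n,i) is the binomial coefficient. -/
open Finset

/-- Stirling numbers of the second kind. -/
def stirling2 : ℕ → ℕ → ℕ
  | 0, 0 => 1
  | 0, _ + 1 => 0
  | _ + 1, 0 => 0
  | n + 1, k + 1 => stirling2 n k + (k + 1) * stirling2 n (k + 1)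

/-- Bell numbers. -/
def bell (n : ℕ) : ℕ := ∑ k ∈ range (n + 1), stirling2 n k

/-- r-Stirling numbers of the second kind. -/
def rStirling2 (r n k : ℕ) : ℕ :=
  ∑ i ∈ range (n + 1), r ^ (n - i) * n.choose i * stirling2 i k

/-- r-Bell numbers. -/
def rBell (r n : ℕ) : ℕ := ∑ k ∈ range (n + 1), rStirling2 r n k

lemma stirling2_eq_zero : ∀ {n k : ℕ}, n < k → stirling2 n k = 0
  | 0, 0, h => absurd h (by omega)
  | 0, _ + 1, _ => rfl
  | n + 1, 0, h => absurd h (by omega)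
  | n + 1, k + 1, h => by
      show stirling2 n k + (k + 1) * stirling2 n (k + 1) = 0
      rw [stirling2_eq_zero (by omega), stirling2_eq_zero (by omega), Nat.mul_zero]

lemma stirling2_succ (n k : ℕ) :
    stirling2 (n + 1) (k + 1) = stirling2 n k + (k + 1) * stirling2 n (k + 1) := rfl

lemma stirling2_succ_zero (n : ℕ) : stirling2 (n + 1) 0 = 0 := rfl

lemma sum_stirling2_of_le {i N : ℕ} (h : i ≤ N) :
    ∑ k ∈ range (N + 1), stirling2 i k = bell i := by
  rw [bell]
  symm
  apply Finset.sum_subset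
  · intro x hx
    simp only [Finset.mem_range] at *
    omega
  · intro x _ hx
    simp only [Finset.mem_range] at *
    exact stirling2_eq_zero (by omega)

lemma stirling2_succ_eq_sum (n k : ℕ) :
    stirling2 (n + 1) (k + 1) = ∑ i ∈ range (n + 1), n.choose i * stirling2 i k := by
  induction n generalizing k with
  | zero => simp [stirling2_succ, stirling2_eq_zero]
  | succ n ih =>
    rw [Finset.sum_range_succ' (fun i => (n + 1).choose i * stirling2 i k)]
    simp only [Nat.choose_succ_succ, Nat.succ_eq_add_one, Nat.choose_zero_right, one_mul,
      add_mul]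
    rw [Finset.sum_add_distrib]
    have h2 : (∑ i ∈ range (n + 1), n.choose (i + 1) * stirling2 (i + 1) k)
        + stirling2 0 k = stirling2 (n + 1) (k + 1) := by
      rw [ih k, Finset.sum_range_succ (fun i => n.choose (i + 1) * stirling2 (i + 1) k)]
      rw [Nat.choose_succ_self, Nat.zero_mul, Nat.add_zero]
      
      rw [Finset.sum_range_succ' (fun i => n.choose i * stirling2 i k)]
      simp
    rw [Nat.add_assoc (∑ x ∈ range (n + 1), n.choose x * stirling2 (x + 1) k), h2]
    cases k with
    | zero =>
      simp only [stirling2_succ_zero, Nat.mul_zero, Finset.sum_const_zero, Nat.zero_add]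
      rw [stirling2_succ]
      simp [stirling2_succ_zero]
    | succ k =>
      have hstep : ∀ i, stirling2 (i + 1) (k + 1) =
          stirling2 i k + (k + 1) * stirling2 i (k + 1) := fun i => rfl
      simp only [hstep, Nat.mul_add, Finset.sum_add_distrib]
      have h3 : ∑ x ∈ range (n + 1), n.choose x * ((k + 1) * stirling2 x (k + 1))
          = (k + 1) * ∑ x ∈ range (n + 1), n.choose x * stirling2 x (k + 1) := by
        rw [Finset.mul_sum]
        exact Finset.sum_congr rfl fun x _ => by ring
      rw [h3, ← ih k, ← ih (k + 1), stirling2_succ (n + 1) (k + 1)]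
      ring

lemma bell_succ (n : ℕ) : bell (n + 1) = ∑ i ∈ range (n + 1), n.choose i * bell i := by
  rw [bell, Finset.sum_range_succ' (fun k => stirling2 (n + 1) k), stirling2_succ_zero,
    add_zero]
  have h : ∀ k, stirling2 (n + 1) (k + 1) = ∑ i ∈ range (n + 1), n.choose i * stirling2 i k :=
    stirling2_succ_eq_sum n
  simp only [h]
  rw [Finset.sum_comm]
  refine Finset.sum_congr rfl fun i hi => ?_
  rw [← Finset.mul_sum, sum_stirling2_of_le (by simp only [Finset.mem_range] at hi; omega)]

lemma rBell_eq (s n : ℕ) :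
    rBell s n = ∑ i ∈ range (n + 1), s ^ (n - i) * n.choose i * bell i := by
  rw [rBell]
  simp only [rStirling2]
  rw [Finset.sum_comm]
  refine Finset.sum_congr rfl fun i hi => ?_
  rw [← Finset.mul_sum, sum_stirling2_of_le (by simp only [Finset.mem_range] at hi; omega)]

lemma choose_pow_sum (s n t : ℕ) :
    ∑ i ∈ range (n + 1), s ^ (n - i) * n.choose i * i.choose t
      = (s + 1) ^ (n - t) * n.choose t := by
  by_cases ht : t ≤ n
  case neg =>
    rw [Nat.choose_eq_zero_of_lt (by omega), Nat.mul_zero]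
    apply Finset.sum_eq_zero
    intro i hi
    simp only [Finset.mem_range] at hi
    rw [Nat.choose_eq_zero_of_lt (show i < t by omega), Nat.mul_zero]
  rw [← Finset.sum_range_add_sum_Ico _ (show t ≤ n + 1 by omega)]
  have hz : ∑ i ∈ range t, s ^ (n - i) * n.choose i * i.choose t = 0 := by
    apply Finset.sum_eq_zero
    intro i hi
    simp only [Finset.mem_range] at hi
    rw [Nat.choose_eq_zero_of_lt hi, Nat.mul_zero]
  rw [hz, zero_add, Finset.sum_Ico_eq_sum_range]
  have hr : ∀ d ∈ range (n + 1 - t), s ^ (n - (t + d)) * n.choose (t + d) * (t + d).choose t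
      = n.choose t * ((n - t).choose d * s ^ (n - t - d)) := by
    intro d hd
    simp only [Finset.mem_range] at hd
    rw [mul_assoc, Nat.choose_mul (n := n) (k := t + d) (s := t) (by omega)]
    rw [show t + d - t = d by omega, show n - (t + d) = n - t - d by omega]
    ring
  rw [Finset.sum_congr rfl hr, ← Finset.mul_sum, show n + 1 - t = (n - t) + 1 by omega]
  have hb : ∑ d ∈ range (n - t + 1), (n - t).choose d * s ^ (n - t - d) = (s + 1) ^ (n - t) := by
    rw [show s + 1 = 1 + s from by omega, add_pow 1 s (n - t)]
    refine Finset.sum_congr rfl fun d hd => ?_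
    simp only [one_pow, Nat.cast_id]
    ring
  rw [hb, mul_comm]

lemma rBell_succ (s n : ℕ) : rBell s (n + 1) = s * rBell s n + rBell (s + 1) n := by
  rw [rBell_eq s (n + 1), Finset.sum_range_succ'
    (fun i => s ^ (n + 1 - i) * (n + 1).choose i * bell i)]
  simp only [Nat.choose_succ_succ, Nat.succ_eq_add_one, Nat.succ_sub_succ,
    Nat.choose_zero_right, Nat.mul_add, Nat.add_mul, Nat.mul_one, Nat.one_mul, Nat.sub_zero]
  rw [Finset.sum_add_distrib]
  have hA : ∑ i ∈ range (n + 1), s ^ (n - i) * n.choose i * bell (i + 1)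
      = rBell (s + 1) n := by
    simp only [bell_succ, Finset.mul_sum]
    have hext : ∀ x ∈ range (n + 1),
        ∑ i ∈ range (x + 1), s ^ (n - x) * n.choose x * (x.choose i * bell i)
          = ∑ i ∈ range (n + 1), s ^ (n - x) * n.choose x * (x.choose i * bell i) := by
      intro x hx
      simp only [Finset.mem_range] at hx
      apply Finset.sum_subset
      · intro y hy
        simp only [Finset.mem_range] at *
        omega
      · intro y _ hy
        simp only [Finset.mem_range] at *
        rw [Nat.choose_eq_zero_of_lt (show x < y by omega), Nat.zero_mul, Nat.mul_zero]
    rw [Finset.sum_congr rfl hext, Finset.sum_comm]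
    rw [rBell_eq]
    refine Finset.sum_congr rfl fun t ht => ?_
    have h1 : ∀ i ∈ range (n + 1), s ^ (n - i) * n.choose i * (i.choose t * bell t)
        = (s ^ (n - i) * n.choose i * i.choose t) * bell t := fun i _ => by ring
    rw [Finset.sum_congr rfl h1, ← Finset.sum_mul, choose_pow_sum]
  have hB : (∑ i ∈ range (n + 1), s ^ (n - i) * n.choose (i + 1) * bell (i + 1))
      + s ^ (n + 1) * bell 0
      = s * rBell s n := by
    rw [rBell_eq, Finset.mul_sum]
    have h1 : ∀ j ∈ range (n + 1), s * (s ^ (n - j) * n.choose j * bell j)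
        = s ^ (n + 1 - j) * n.choose j * bell j := by
      intro j hj
      simp only [Finset.mem_range] at hj
      rw [show n + 1 - j = (n - j) + 1 by omega, pow_succ]
      ring
    rw [Finset.sum_congr rfl h1,
      Finset.sum_range_succ' (fun j => s ^ (n + 1 - j) * n.choose j * bell j)]
    simp only [Nat.succ_sub_succ, Nat.choose_zero_right, Nat.sub_zero, Nat.mul_one]
    rw [Finset.sum_range_succ (fun i => s ^ (n - i) * n.choose (i + 1) * bell (i + 1)),
      Nat.choose_succ_self, Nat.mul_zero, Nat.zero_mul, Nat.add_zero]
  rw [hA, ← hB]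
  ring

lemma rStirling2_split (r m k : ℕ) :
    rStirling2 r (m + 1) k
      = (∑ i ∈ range (m + 1), r ^ (m - i) * m.choose i * stirling2 (i + 1) k)
        + r * rStirling2 r m k := by
  rw [rStirling2, Finset.sum_range_succ'
    (fun i => r ^ (m + 1 - i) * (m + 1).choose i * stirling2 i k)]
  simp only [Nat.choose_succ_succ, Nat.succ_eq_add_one, Nat.succ_sub_succ,
    Nat.choose_zero_right, Nat.mul_add, Nat.add_mul, Nat.mul_one, Nat.one_mul, Nat.sub_zero]
  rw [Finset.sum_add_distrib]
  have hB : (∑ i ∈ range (m + 1), r ^ (m - i) * m.choose (i + 1) * stirling2 (i + 1) k)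
      + r ^ (m + 1) * stirling2 0 k = r * rStirling2 r m k := by
    rw [rStirling2, Finset.mul_sum]
    have h1 : ∀ j ∈ range (m + 1), r * (r ^ (m - j) * m.choose j * stirling2 j k)
        = r ^ (m + 1 - j) * m.choose j * stirling2 j k := by
      intro j hj
      simp only [Finset.mem_range] at hj
      rw [show m + 1 - j = (m - j) + 1 by omega, pow_succ]
      ring
    rw [Finset.sum_congr rfl h1,
      Finset.sum_range_succ' (fun j => r ^ (m + 1 - j) * m.choose j * stirling2 j k)]
    simp only [Nat.succ_sub_succ, Nat.choose_zero_right, Nat.sub_zero, Nat.mul_one]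
    rw [Finset.sum_range_succ (fun i => r ^ (m - i) * m.choose (i + 1) * stirling2 (i + 1) k),
      Nat.choose_succ_self, Nat.mul_zero, Nat.zero_mul, Nat.add_zero]
  rw [← hB]
  ring

lemma rStirling2_succ_zero (r m : ℕ) : rStirling2 r (m + 1) 0 = r * rStirling2 r m 0 := by
  rw [rStirling2_split]
  have : ∀ i ∈ range (m + 1), r ^ (m - i) * m.choose i * stirling2 (i + 1) 0 = 0 := by
    intro i _
    rw [stirling2_succ_zero, Nat.mul_zero]
  rw [Finset.sum_congr rfl this, Finset.sum_const_zero, Nat.zero_add]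

lemma rStirling2_succ_succ (r m k : ℕ) :
    rStirling2 r (m + 1) (k + 1)
      = rStirling2 r m k + (k + 1 + r) * rStirling2 r m (k + 1) := by
  rw [rStirling2_split]
  have h1 : ∀ i ∈ range (m + 1), r ^ (m - i) * m.choose i * stirling2 (i + 1) (k + 1)
      = r ^ (m - i) * m.choose i * stirling2 i k
        + (k + 1) * (r ^ (m - i) * m.choose i * stirling2 i (k + 1)) := by
    intro i _
    rw [stirling2_succ]
    ring
  rw [Finset.sum_congr rfl h1, Finset.sum_add_distrib, ← Finset.mul_sum]
  rw [← rStirling2, ← rStirling2]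
  ring

lemma rStirling2_eq_zero {r m k : ℕ} (h : m < k) : rStirling2 r m k = 0 := by
  apply Finset.sum_eq_zero
  intro i hi
  simp only [Finset.mem_range] at hi
  rw [stirling2_eq_zero (show i < k by omega), Nat.mul_zero]

lemma rBell_bridge (m : ℕ) : ∀ n r : ℕ,
    rBell r (m + n) = ∑ j ∈ range (m + 1), rStirling2 r m j * rBell (j + r) n := by
  induction m with
  | zero =>
    intro n r
    simp [rStirling2, stirling2]
  | succ m ih =>
    intro n r
    rw [show m + 1 + n = m + (n + 1) by omega, ih (n + 1) r]
    have hterm : ∀ j ∈ range (m + 1), rStirling2 r m j * rBell (j + r) (n + 1)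
        = rStirling2 r m j * rBell (j + r + 1) n
          + (j + r) * rStirling2 r m j * rBell (j + r) n := by
      intro j _
      rw [rBell_succ (j + r) n]
      ring
    rw [Finset.sum_congr rfl hterm, Finset.sum_add_distrib]
    rw [Finset.sum_range_succ' (fun j => rStirling2 r (m + 1) j * rBell (j + r) n)]
    have h1 : ∀ j ∈ range (m + 1), rStirling2 r (m + 1) (j + 1) * rBell (j + 1 + r) n
        = rStirling2 r m j * rBell (j + r + 1) n
          + (j + 1 + r) * (rStirling2 r m (j + 1) * rBell (j + 1 + r) n) := by
      intro j _
      rw [rStirling2_succ_succ, show j + 1 + r = j + r + 1 by omega]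
      ring
    rw [Finset.sum_congr rfl h1, Finset.sum_add_distrib, rStirling2_succ_zero]
    have hB : ∑ j ∈ range (m + 1), (j + r) * rStirling2 r m j * rBell (j + r) n
        = (∑ j ∈ range (m + 1),
            (j + 1 + r) * (rStirling2 r m (j + 1) * rBell (j + 1 + r) n))
          + r * rStirling2 r m 0 * rBell (0 + r) n := by
      have h2 : ∑ j ∈ range (m + 1), (j + r) * rStirling2 r m j * rBell (j + r) n
          = ∑ j ∈ range (m + 2), (j + r) * rStirling2 r m j * rBell (j + r) n := by
        conv_rhs => rw [Finset.sum_range_succ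
          (fun j => (j + r) * rStirling2 r m j * rBell (j + r) n),
          rStirling2_eq_zero (show m < m + 1 by omega), Nat.mul_zero, Nat.zero_mul,
          Nat.add_zero]
      rw [h2, Finset.sum_range_succ'
        (fun j => (j + r) * rStirling2 r m j * rBell (j + r) n)]
      congr 1
      · exact Finset.sum_congr rfl fun j _ => by ring
      · ring
    omega

theorem rBell_add (m n r : ℕ) :
    rBell r (m + n) =
      ∑ i ∈ range (n + 1), ∑ j ∈ range (m + 1),
        (j + r) ^ (n - i) * n.choose i * rStirling2 r m j * bell i := by
  rw [rBell_bridge m n r, Finset.sum_comm]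
  refine Finset.sum_congr rfl fun j _ => ?_
  rw [rBell_eq (j + r) n, Finset.mul_sum]
  refine Finset.sum_congr rfl fun i _ => ?_
  ring
end

section
/- For all integers m, n, k ≥ 1: C(m+n-k-1, k-1) = Σ_{i=0}^{n} Σ_{j=0}^{m} α_{i,j} · (-1)^{(i+1)j} · C(n,i) · C(m-⌊j/2⌋-1, m-j) · C(i-k+⌈j/2⌉-1, i-2k+j), where α_{i,j} = χ(j is odd) + χ(j is even and i = n). -/
open Finset

/-- Binomial coefficient with integer arguments: C(a,0) = 1 for every integer a, and
C(a,b) = 0 whenever b < 0 or 0 ≤ b ≤ a fails (for b > 0). -/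
def C (a b : ℤ) : ℤ :=
  if b = 0 then 1 else if 0 ≤ b ∧ b ≤ a then (a.toNat.choose b.toNat : ℤ) else 0

lemma C_congr {a b a2 b2 : ℤ} (ha : a = a2) (hb : b = b2) : C a b = C a2 b2 := by
  rw [ha, hb]
lemma C_one : C 1 1 = 1 := by simp [C]


lemma C_zero (a : ℤ) : C a 0 = 1 := by simp [C]

lemma C_neg {a b : ℤ} (h : b < 0) : C a b = 0 := by
  simp only [C]; rw [if_neg (by omega), if_neg (by omega)]

lemma C_lt {a b : ℤ} (hb : 0 < b) (h : a < b) : C a b = 0 := by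
  simp only [C]; rw [if_neg (by omega), if_neg (by omega)]

lemma C_nat {a b : ℤ} (h0 : 0 ≤ b) (h : b ≤ a) : C a b = (a.toNat.choose b.toNat : ℤ) := by
  simp only [C]
  rcases eq_or_ne b 0 with rfl | hb
  · simp
  · rw [if_neg hb, if_pos ⟨h0, h⟩]

lemma C_nat' {a b : ℤ} (hb : 0 < b) : C a b = (a.toNat.choose b.toNat : ℤ) := by
  rcases le_or_gt b a with h | h
  · exact C_nat (by omega) h
  · rw [C_lt hb h, Nat.choose_eq_zero_of_lt (by omega)]; simp

lemma C_pascal {a b : ℤ} (h : ¬(b = 1 ∧ a ≤ 0)) : C a b = C (a-1) (b-1) + C (a-1) b := by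
  rcases lt_trichotomy b 0 with hb | rfl | hb
  · rw [C_neg hb, C_neg (by omega), C_neg hb]; ring
  · rw [C_zero, C_neg (by omega), C_zero]; ring
  · rcases eq_or_lt_of_le (by omega : (1:ℤ) ≤ b) with rfl | hb2
    · have ha : 1 ≤ a := by
        by_contra hc; exact h ⟨rfl, by omega⟩
      rw [C_nat (by omega) (by omega), C_nat' hb, (by norm_num : (1:ℤ)-1 = 0), C_zero]
      have e1 : a.toNat = (a-1).toNat + 1 := by omega
      rw [e1, (by omega : Int.toNat 1 = 1), Nat.choose_one_right,
        Nat.choose_one_right]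
      push_cast; omega
    · rcases lt_or_ge a b with hab | hab
      · rw [C_lt hb hab, C_nat' (show (0:ℤ) < b-1 by omega), C_nat' hb,
          Nat.choose_eq_zero_of_lt (by omega), Nat.choose_eq_zero_of_lt (by omega)]
        simp
      · have ha : 1 ≤ a := by omega
        rw [C_nat (by omega) hab, C_nat (by omega) (by omega), C_nat' hb]
        have e1 : a.toNat = (a-1).toNat + 1 := by omega
        have e2 : b.toNat = (b-1).toNat + 1 := by omega
        rw [e1, e2, Nat.choose_succ_succ]
        push_cast; ring

lemma C_symm {a b : ℤ} (ha : 0 ≤ a) : C a b = C a (a - b) := by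
  rcases lt_trichotomy b 0 with hb | rfl | hb
  · rw [C_neg hb, C_lt (by omega) (by omega)]
  · rw [C_zero, sub_zero, C_nat (by omega) (by omega), Nat.choose_self]; simp
  · rcases le_or_gt b a with hab | hab
    · rw [C_nat (by omega) hab, C_nat (by omega) (by omega)]
      rw [(by omega : (a-b).toNat = a.toNat - b.toNat), Nat.choose_symm (by omega)]
    · rw [C_lt hb hab, C_neg (by omega)]


-- partial alternating sum of binomials:
lemma lemW0 : ∀ (T r : ℕ),
    ∑ s ∈ range (T+1), (-1:ℤ)^s * ((1+T+r).choose (T-s) : ℤ) = ((T+r).choose T : ℤ) := by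
  intro T
  induction T with
  | zero => intro r; simp
  | succ T ih =>
    intro r
    rw [Finset.sum_range_succ' _ (T+1)]
    have e1 : ∀ s ∈ range (T+1),
        (-1:ℤ)^(s+1) * ((1+(T+1)+r).choose (T+1-(s+1)) : ℤ)
        = -((-1:ℤ)^s * ((1+T+(r+1)).choose (T-s) : ℤ)) := by
      intro s hs
      rw [(by omega : 1+(T+1)+r = 1+T+(r+1)), (by omega : T+1-(s+1) = T-s)]
      ring
    rw [Finset.sum_congr rfl e1, Finset.sum_neg_distrib, ih (r+1)]
    rw [pow_zero, one_mul, (by omega : T+1-0 = T+1), (by omega : 1+(T+1)+r = (T+1+r)+1),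
      Nat.choose_succ_succ (T+1+r) T, (by omega : T+(r+1) = T+1+r)]
    push_cast
    ring

lemma lemW : ∀ (u T r : ℕ),
    ∑ s ∈ range (T+1), (-1:ℤ)^s * ((u+s).choose s : ℤ) * ((u+1+T+r).choose (T-s) : ℤ)
      = ((T+r).choose T : ℤ) := by
  intro u
  induction u with
  | zero =>
    intro T r
    have e : ∀ s ∈ range (T+1), (-1:ℤ)^s * ((0+s).choose s : ℤ) * ((0+1+T+r).choose (T-s) : ℤ)
        = (-1:ℤ)^s * ((1+T+r).choose (T-s) : ℤ) := by
      intro s hs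
      rw [(by omega : 0+s = s), Nat.choose_self, (by omega : 0+1+T+r = 1+T+r)]
      push_cast; ring
    rw [Finset.sum_congr rfl e, lemW0]
  | succ u ihu =>
    intro T
    induction T with
    | zero => intro r; simp
    | succ T ihT =>
      intro r
      -- split coefficient by Pascal: (u+1+s).choose s = (u+s).choose s + (u+s).choose (s-1)
      have e : ∀ s ∈ range (T+2),
          (-1:ℤ)^s * ((u+1+s).choose s : ℤ) * ((u+1+1+(T+1)+r).choose (T+1-s) : ℤ)
          = (-1:ℤ)^s * ((u+s).choose s : ℤ) * ((u+1+(T+1)+(r+1)).choose (T+1-s) : ℤ)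
            + (if s = 0 then 0 else
               (-1:ℤ)^s * ((u+s).choose (s-1) : ℤ) * ((u+1+1+(T+1)+r).choose (T+1-s) : ℤ)) := by
        intro s hs
        rcases s with _ | s'
        · simp
          rw [(by omega : u+1+1+(T+1)+r = u+1+(T+1)+(r+1))]
        · rw [if_neg (by omega), (by omega : u+1+(s'+1) = (u+(s'+1))+1),
            Nat.choose_succ_succ (u+(s'+1)) s',
            (by omega : u+1+(T+1)+(r+1) = u+1+1+(T+1)+r), (by omega : s'+1-1 = s')]
          push_cast; ring
      rw [Finset.sum_congr rfl e, Finset.sum_add_distrib, ihu (T+1) (r+1)]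
      -- second sum: peel s=0 then reindex
      rw [Finset.sum_range_succ' _ (T+1)]
      simp only [if_neg (Nat.succ_ne_zero _), if_pos rfl, add_zero]
      have e2 : ∀ s ∈ range (T+1),
          (-1:ℤ)^(s+1) * ((u+(s+1)).choose (s+1-1) : ℤ) * ((u+1+1+(T+1)+r).choose (T+1-(s+1)) : ℤ)
          = -((-1:ℤ)^s * ((u+1+s).choose s : ℤ) * ((u+1+1+T+(r+1)).choose (T-s) : ℤ)) := by
        intro s hs
        rw [(by omega : s+1-1 = s), (by omega : u+(s+1) = u+1+s),
          (by omega : T+1-(s+1) = T-s), (by omega : u+1+1+(T+1)+r = u+1+1+T+(r+1))]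
        ring
      rw [Finset.sum_congr rfl e2, Finset.sum_neg_distrib, ihT (r+1)]
      -- now: choose(T+1+(r+1), T+1) - choose(T+(r+1), T) = choose(T+1+r, T+1)
      rw [(by omega : T+1+(r+1) = (T+1+r)+1), Nat.choose_succ_succ (T+1+r) T,
        (by omega : T+(r+1) = T+1+r)]
      push_cast; ring

lemma C_ofNat (p q : ℕ) : C (p:ℤ) (q:ℤ) = (p.choose q : ℤ) := by
  rcases Nat.eq_zero_or_pos q with rfl | hq
  · simp [C_zero]
  · rw [C_nat' (by exact_mod_cast hq)]
    simp

lemma lemA (n k t : ℕ) (hn : 1 ≤ n) :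
    ∑ i ∈ range (n+1), (-1:ℤ)^(i+1) * (n.choose i : ℤ)
        * C ((i:ℤ) - k + t) ((i:ℤ) - 2*k + (2*t+1))
      = C ((n:ℤ) - k + t) ((n:ℤ) - 2*k + (2*t+1)) := by
  rcases le_or_gt k t with hkt | htk
  · -- t ≥ k : everything vanishes
    rw [Finset.sum_eq_zero, C_lt (by omega) (by omega)]
    intro i hi
    rw [C_lt (by omega) (by omega)]
    ring
  · -- u := k - t ≥ 1
    obtain ⟨u, rfl⟩ : ∃ u, k = t + u := ⟨k - t, by omega⟩
    have hu : 1 ≤ u := by omega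
    have ea : ∀ i : ℕ, (i:ℤ) - ((t+u:ℕ):ℤ) + t = (i:ℤ) - u := by intro i; push_cast; ring
    have eb : ∀ i : ℕ, (i:ℤ) - 2*((t+u:ℕ):ℤ) + (2*t+1) = (i:ℤ) - 2*u + 1 := by
      intro i; push_cast; ring
    rcases lt_or_ge n (2*u-1) with hn2 | hn2
    · -- n ≤ 2u-2 : everything vanishes
      rw [Finset.sum_eq_zero, eb, C_neg (by omega)]
      intro i hi
      simp only [Finset.mem_range] at hi
      rw [eb, C_neg (by omega)]
      ring
    · obtain ⟨T, hT⟩ : ∃ T, n = 2*u-1+T := ⟨n - (2*u-1), by omega⟩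
      rw [Finset.range_eq_Ico,
        ← Finset.sum_Ico_consecutive _ (Nat.zero_le (2*u-1)) (by omega : 2*u-1 ≤ n+1)]
      have hlo : ∑ i ∈ Finset.Ico 0 (2*u-1), (-1:ℤ)^(i+1) * (n.choose i : ℤ)
          * C ((i:ℤ) - ((t+u:ℕ):ℤ) + t) ((i:ℤ) - 2*((t+u:ℕ):ℤ) + (2*t+1)) = 0 := by
        apply Finset.sum_eq_zero
        intro i hi
        simp only [Finset.mem_Ico] at hi
        rw [eb, C_neg (by omega)]
        ring
      rw [hlo, zero_add, Finset.sum_Ico_eq_sum_range, (by omega : n+1-(2*u-1) = T+1)]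
      have e : ∀ s ∈ range (T+1),
          (-1:ℤ)^((2*u-1+s)+1) * (n.choose (2*u-1+s) : ℤ)
            * C ((↑(2*u-1+s):ℤ) - ((t+u:ℕ):ℤ) + t) ((↑(2*u-1+s):ℤ) - 2*((t+u:ℕ):ℤ) + (2*t+1))
          = (-1:ℤ)^s * (((u-1)+s).choose s : ℤ) * (((u-1)+1+T+(u-1)).choose (T-s) : ℤ) := by
        intro s hs
        simp only [Finset.mem_range] at hs
        rw [ea, eb]
        rw [(show (↑(2*u-1+s):ℤ) - u = ((u-1+s : ℕ) : ℤ) by push_cast [hu]; omega),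
            (show (↑(2*u-1+s):ℤ) - 2*u + 1 = ((s : ℕ) : ℤ) by push_cast [hu]; omega),
            C_ofNat]
        rw [← Nat.choose_symm (by omega : 2*u-1+s ≤ n), (by omega : n - (2*u-1+s) = T-s),
            (by omega : (2*u-1+s)+1 = 2*u+s), (by omega : n = (u-1)+1+T+(u-1)),
            pow_add, pow_mul, neg_one_sq, one_pow, one_mul, (by omega : u-1+s = (u-1)+s)]
        ring
      rw [Finset.sum_congr rfl e, lemW (u-1) T (u-1)]
      rw [ea n, eb n,
        (show (n:ℤ) - u = ((T + (u-1) : ℕ) : ℤ) by push_cast [hu]; omega),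
        (show (n:ℤ) - 2*u + 1 = ((T : ℕ) : ℤ) by push_cast [hu]; omega),
        C_ofNat]
lemma lemB (n : ℕ) : ∀ m k : ℕ, 1 ≤ n → 1 ≤ m → 1 ≤ k →
    ∑ j ∈ range (m+1), C ((m:ℤ) - (j:ℤ)/2 - 1) ((m:ℤ) - j)
        * C ((n:ℤ) - k + ((j:ℤ)+1)/2 - 1) ((n:ℤ) - 2*k + j)
      = C ((m:ℤ) + n - k - 1) ((k:ℤ) - 1) := by
  induction n using Nat.strong_induction_on with
  | _ n ih =>
  intro m k hn hm hk
  rcases (by omega : n = 1 ∨ n = 2 ∨ 3 ≤ n) with rfl | rfl | hn3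
  · -- n = 1
    simp only [Nat.cast_one]
    rw [Finset.sum_eq_single (2*k-1)]
    · rw [(by omega : ((2*k-1:ℕ):ℤ) = 2*(k:ℤ)-1)]
      rcases le_or_gt k m with hkm | hkm
      · rw [(by omega : (1:ℤ) - k + ((2*(k:ℤ)-1)+1)/2 - 1 = 0),
          (by omega : (1:ℤ) - 2*k + (2*(k:ℤ)-1) = 0), C_zero, mul_one,
          (by omega : (m:ℤ) - (2*(k:ℤ)-1)/2 - 1 = (m:ℤ) - k),
          (by omega : (m:ℤ) - (2*(k:ℤ)-1) = (m:ℤ) - 2*k + 1),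
          (by omega : (m:ℤ) + 1 - k - 1 = (m:ℤ) - k),
          C_symm (by omega : (0:ℤ) ≤ (m:ℤ) - k),
          (by omega : (m:ℤ) - k - ((m:ℤ) - 2*k + 1) = (k:ℤ) - 1)]
      · have hk2 : 2 ≤ k := by omega
        rw [(by omega : (m:ℤ) - (2*(k:ℤ)-1) = (m:ℤ) - 2*k + 1),
          C_neg (by omega), zero_mul, C_lt (by omega) (by omega)]
    · intro j hj hne
      simp only [Finset.mem_range] at hj
      rcases lt_or_ge j (2*k-1) with h | h
      · rw [C_neg (show (1:ℤ) - 2*(k:ℤ) + (j:ℤ) < 0 by omega), mul_zero]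
      · have h2 : 2*k ≤ j := by omega
        rw [C_lt (show (0:ℤ) < 1 - 2*(k:ℤ) + (j:ℤ) by omega)
            (show (1:ℤ) - (k:ℤ) + ((j:ℤ)+1)/2 - 1 < 1 - 2*(k:ℤ) + (j:ℤ) by omega), mul_zero]
    · intro hnotin
      simp only [Finset.mem_range] at hnotin
      have hmk : m < 2*k-1 := by omega
      rw [C_neg (show (m:ℤ) - ((2*k-1:ℕ):ℤ) < 0 by omega), zero_mul]
  · -- n = 2
    have split : ∀ j ∈ range (m+1),
        C ((m:ℤ) - (j:ℤ)/2 - 1) ((m:ℤ) - j)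
          * C ((2:ℕ) - k + ((j:ℤ)+1)/2 - 1) (((2:ℕ):ℤ) - 2*k + j)
        = (if j = 2*k-2 then C ((m:ℤ) - (j:ℤ)/2 - 1) ((m:ℤ) - j)
            * C (((2:ℕ):ℤ) - k + ((j:ℤ)+1)/2 - 1) (((2:ℕ):ℤ) - 2*k + j) else 0)
          + (if j = 2*k-1 then C ((m:ℤ) - (j:ℤ)/2 - 1) ((m:ℤ) - j)
            * C (((2:ℕ):ℤ) - k + ((j:ℤ)+1)/2 - 1) (((2:ℕ):ℤ) - 2*k + j) else 0) := by
      intro j hj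
      rcases (by omega : j = 2*k-2 ∨ j = 2*k-1 ∨ (j < 2*k-2 ∨ 2*k ≤ j)) with h | h | h
      · rw [if_pos h, if_neg (by omega), add_zero]
      · rw [if_neg (by omega), if_pos h, zero_add]
      · rw [if_neg (by omega), if_neg (by omega)]
        rcases h with h | h
        · rw [C_neg (show ((2:ℕ):ℤ) - 2*k + j < 0 by push_cast; omega), mul_zero, add_zero]
        · rw [C_lt (show (0:ℤ) < ((2:ℕ):ℤ) - 2*k + j by push_cast; omega)
              (show ((2:ℕ):ℤ) - k + ((j:ℤ)+1)/2 - 1 < ((2:ℕ):ℤ) - 2*k + j by push_cast; omega),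
            mul_zero, add_zero]
    rw [Finset.sum_congr rfl split, Finset.sum_add_distrib,
      Finset.sum_ite_eq' (range (m+1)) (2*k-2), Finset.sum_ite_eq' (range (m+1)) (2*k-1)]
    have hA : ∀ h : 2*k-2 ≤ m, C ((m:ℤ) - (↑(2*k-2):ℤ)/2 - 1) ((m:ℤ) - ↑(2*k-2))
        * C (((2:ℕ):ℤ) - k + ((↑(2*k-2):ℤ)+1)/2 - 1) (((2:ℕ):ℤ) - 2*k + ↑(2*k-2))
        = C ((m:ℤ) - k) ((m:ℤ) - 2*k + 2) := by
      intro h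
      rw [(by push_cast; omega : ((2:ℕ):ℤ) - 2*k + ↑(2*k-2) = 0), C_zero, mul_one,
        (by push_cast; omega : (m:ℤ) - (↑(2*k-2):ℤ)/2 - 1 = (m:ℤ) - k),
        (by push_cast; omega : (m:ℤ) - ↑(2*k-2) = (m:ℤ) - 2*k + 2)]
    have hB : ∀ h : 2*k-1 ≤ m, C ((m:ℤ) - (↑(2*k-1):ℤ)/2 - 1) ((m:ℤ) - ↑(2*k-1))
        * C (((2:ℕ):ℤ) - k + ((↑(2*k-1):ℤ)+1)/2 - 1) (((2:ℕ):ℤ) - 2*k + ↑(2*k-1))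
        = C ((m:ℤ) - k) ((m:ℤ) - 2*k + 1) := by
      intro h
      rw [(show ((2:ℕ):ℤ) - 2*k + ↑(2*k-1) = 1 by push_cast [Nat.cast_sub (by omega : 1 ≤ 2*k)]; ring),
        (show ((2:ℕ):ℤ) - k + ((↑(2*k-1):ℤ)+1)/2 - 1 = 1 by omega),
        C_one, mul_one,
        (show (m:ℤ) - (↑(2*k-1):ℤ)/2 - 1 = (m:ℤ) - k by omega),
        (show (m:ℤ) - ↑(2*k-1) = (m:ℤ) - 2*k + 1 by omega)]
    rcases (by omega : (2*k-1 ≤ m) ∨ (2*k-2 ≤ m ∧ m < 2*k-1) ∨ m < 2*k-2) with hc | hc | hc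
    · rw [if_pos (by simp only [Finset.mem_range]; omega),
        if_pos (by simp only [Finset.mem_range]; omega), hA (by omega), hB hc]
      rw [(by push_cast; omega : (m:ℤ) + ((2:ℕ):ℤ) - k - 1 = (m:ℤ) - k + 1),
        C_symm (show (0:ℤ) ≤ (m:ℤ) - k + 1 by omega),
        (by omega : (m:ℤ) - k + 1 - ((k:ℤ) - 1) = (m:ℤ) - 2*k + 2),
        C_pascal (show ¬((m:ℤ) - 2*k + 2 = 1 ∧ (m:ℤ) - k + 1 ≤ 0) by omega),
        (by omega : (m:ℤ) - k + 1 - 1 = (m:ℤ) - k),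
        (by omega : (m:ℤ) - 2*k + 2 - 1 = (m:ℤ) - 2*k + 1)]
      ring
    · -- m = 2k-2, k ≥ 2
      have hk2 : 2 ≤ k := by omega
      rw [if_pos (by simp only [Finset.mem_range]; omega),
        if_neg (by simp only [Finset.mem_range]; omega), hA (by omega), add_zero,
        (by omega : (m:ℤ) - 2*k + 2 = 0), C_zero,
        (by push_cast; omega : (m:ℤ) + ((2:ℕ):ℤ) - k - 1 = (k:ℤ) - 1),
        C_nat (by omega) (by omega)]
      simp
    · have hk2 : 2 ≤ k := by omega
      rw [if_neg (by simp only [Finset.mem_range]; omega),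
        if_neg (by simp only [Finset.mem_range]; omega),
        C_lt (show (0:ℤ) < (k:ℤ) - 1 by omega)
          (show (m:ℤ) + ((2:ℕ):ℤ) - k - 1 < (k:ℤ) - 1 by push_cast; omega)]
      ring
  · -- n ≥ 3 : Pascal step
    rcases (by omega : k = 1 ∨ 2 ≤ k) with rfl | hk2
    · -- k = 1
      simp only [Nat.cast_one]
      have step : ∀ j ∈ range (m+1),
          C ((m:ℤ) - (j:ℤ)/2 - 1) ((m:ℤ) - j)
            * C ((n:ℤ) - 1 + ((j:ℤ)+1)/2 - 1) ((n:ℤ) - 2*1 + j)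
          = C ((m:ℤ) - (j:ℤ)/2 - 1) ((m:ℤ) - j)
            * C (((n-1:ℕ):ℤ) - 1 + ((j:ℤ)+1)/2 - 1) (((n-1:ℕ):ℤ) - 2*1 + j) := by
        intro j hj
        rw [C_pascal (show ¬((n:ℤ) - 2*1 + j = 1 ∧ (n:ℤ) - 1 + ((j:ℤ)+1)/2 - 1 ≤ 0) by omega),
          C_lt (show (0:ℤ) < (n:ℤ) - 2*1 + j by omega)
            (show (n:ℤ) - 1 + ((j:ℤ)+1)/2 - 1 - 1 < (n:ℤ) - 2*1 + j by omega),
          add_zero,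
          (show (n:ℤ) - 1 + ((j:ℤ)+1)/2 - 1 - 1 = ((n-1:ℕ):ℤ) - 1 + ((j:ℤ)+1)/2 - 1 by omega),
          (show (n:ℤ) - 2*1 + (j:ℤ) - 1 = ((n-1:ℕ):ℤ) - 2*1 + j by omega)]
      rw [Finset.sum_congr rfl step]
      have ih1 := ih (n-1) (by omega) m 1 (by omega) hm (le_refl 1)
      simp only [Nat.cast_one] at ih1
      rw [ih1, (show (1:ℤ) - 1 = 0 by norm_num), C_zero, C_zero]
    · -- k ≥ 2
      have step : ∀ j ∈ range (m+1),
          C ((m:ℤ) - (j:ℤ)/2 - 1) ((m:ℤ) - j)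
            * C ((n:ℤ) - k + ((j:ℤ)+1)/2 - 1) ((n:ℤ) - 2*k + j)
          = C ((m:ℤ) - (j:ℤ)/2 - 1) ((m:ℤ) - j)
              * C (((n-1:ℕ):ℤ) - k + ((j:ℤ)+1)/2 - 1) (((n-1:ℕ):ℤ) - 2*k + j)
            + C ((m:ℤ) - (j:ℤ)/2 - 1) ((m:ℤ) - j)
              * C (((n-2:ℕ):ℤ) - ((k-1:ℕ):ℤ) + ((j:ℤ)+1)/2 - 1)
                  (((n-2:ℕ):ℤ) - 2*((k-1:ℕ):ℤ) + j) := by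
        intro j hj
        rw [C_pascal (show ¬((n:ℤ) - 2*k + j = 1 ∧ (n:ℤ) - k + ((j:ℤ)+1)/2 - 1 ≤ 0) by omega),
          mul_add,
          (C_congr (show (n:ℤ) - k + ((j:ℤ)+1)/2 - 1 - 1
              = ((n-1:ℕ):ℤ) - k + ((j:ℤ)+1)/2 - 1 by omega)
            (show (n:ℤ) - 2*k + (j:ℤ) - 1 = ((n-1:ℕ):ℤ) - 2*k + j by omega)),
          (C_congr (show (n:ℤ) - k + ((j:ℤ)+1)/2 - 1 - 1
              = ((n-2:ℕ):ℤ) - ((k-1:ℕ):ℤ) + ((j:ℤ)+1)/2 - 1 by omega)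
            (show (n:ℤ) - 2*k + (j:ℤ) = ((n-2:ℕ):ℤ) - 2*((k-1:ℕ):ℤ) + j by omega))]
      rw [Finset.sum_congr rfl step, Finset.sum_add_distrib,
        ih (n-1) (by omega) m k (by omega) hm hk,
        ih (n-2) (by omega) m (k-1) (by omega) hm (by omega),
        C_pascal (show ¬((k:ℤ) - 1 = 1 ∧ (m:ℤ) + n - k - 1 ≤ 0) by omega),
        (show (m:ℤ) + n - k - 1 - 1 = (m:ℤ) + n - k - 2 by omega),
        (show (k:ℤ) - 1 - 1 = (k:ℤ) - 2 by omega),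
        (show (m:ℤ) + ((n-1:ℕ):ℤ) - k - 1 = (m:ℤ) + n - k - 2 by omega),
        (show (m:ℤ) + ((n-2:ℕ):ℤ) - ((k-1:ℕ):ℤ) - 1 = (m:ℤ) + n - k - 2 by omega),
        (show ((k-1:ℕ):ℤ) - 1 = (k:ℤ) - 2 by omega)]
      ring

theorem binom_identity_1 (m n k : ℕ) (hm : 1 ≤ m) (hn : 1 ≤ n) (hk : 1 ≤ k) :
    C ((m : ℤ) + n - k - 1) ((k : ℤ) - 1) =
      ∑ i ∈ range (n + 1), ∑ j ∈ range (m + 1),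
        ((if Odd j then 1 else 0) + (if Even j ∧ i = n then 1 else 0) : ℤ) *
          (-1) ^ ((i + 1) * j) * (n.choose i : ℤ) *
          C ((m : ℤ) - (j : ℤ) / 2 - 1) ((m : ℤ) - j) *
          C ((i : ℤ) - k + ((j : ℤ) + 1) / 2 - 1) ((i : ℤ) - 2 * k + j) := by
  rw [Finset.sum_comm, ← lemB n m k hn hm hk]
  apply Finset.sum_congr rfl
  intro j hj
  rcases Nat.even_or_odd j with hje | hjo
  · -- j even : inner sum collapses at i = n
    obtain ⟨t, rfl⟩ := hje
    have hnotodd : ¬ Odd (t+t) := by rw [Nat.odd_iff]; omega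
    rw [Finset.sum_eq_single n]
    · rw [if_neg hnotodd, if_pos ⟨⟨t, rfl⟩, rfl⟩,
        Even.neg_one_pow (⟨(n+1)*t, by ring⟩ : Even ((n+1)*(t+t))), Nat.choose_self]
      push_cast
      ring
    · intro i hi hne
      rw [if_neg hnotodd, if_neg (by tauto)]
      ring
    · intro h
      exact absurd (Finset.self_mem_range_succ n) h
  · -- j odd
    obtain ⟨t, rfl⟩ := hjo
    have hodd : Odd (2*t+1) := ⟨t, by omega⟩
    have hnoteven : ¬ Even (2*t+1) := by rw [Nat.even_iff]; omega
    have key : ∀ i ∈ range (n+1),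
        ((if Odd (2*t+1) then 1 else 0) + (if Even (2*t+1) ∧ i = n then 1 else 0) : ℤ) *
          (-1) ^ ((i + 1) * (2*t+1)) * (n.choose i : ℤ) *
          C ((m : ℤ) - (↑(2*t+1) : ℤ) / 2 - 1) ((m : ℤ) - ↑(2*t+1)) *
          C ((i : ℤ) - k + ((↑(2*t+1) : ℤ) + 1) / 2 - 1) ((i : ℤ) - 2 * k + ↑(2*t+1))
        = C ((m : ℤ) - (↑(2*t+1) : ℤ) / 2 - 1) ((m : ℤ) - ↑(2*t+1)) *
            ((-1) ^ (i + 1) * (n.choose i : ℤ)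
              * C ((i:ℤ) - k + t) ((i:ℤ) - 2*k + (2*(t:ℤ)+1))) := by
      intro i hi
      rw [if_pos hodd, if_neg (fun h => hnoteven h.1),
        (C_congr (show (i:ℤ) - k + ((↑(2*t+1) : ℤ) + 1) / 2 - 1 = (i:ℤ) - k + t by
            push_cast; omega)
          (show (i:ℤ) - 2 * k + ↑(2*t+1) = (i:ℤ) - 2*k + (2*(t:ℤ)+1) by push_cast; omega)),
        pow_mul]
      rcases Nat.even_or_odd (i+1) with h2 | h2
      · rw [Even.neg_one_pow h2, one_pow]
        ring
      · rw [Odd.neg_one_pow h2, Odd.neg_one_pow hodd]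
        ring
    rw [Finset.sum_congr rfl key, ← Finset.mul_sum, lemA n k t hn,
      (C_congr (show (n:ℤ) - k + ((↑(2*t+1) : ℤ) + 1) / 2 - 1 = (n:ℤ) - k + t by
          push_cast; omega)
        (show (n:ℤ) - 2 * k + ↑(2*t+1) = (n:ℤ) - 2*k + (2*(t:ℤ)+1) by push_cast; omega))]
end

section
/- For all integers m, n, k ≥ 1: C(m+n-k, k-1) = Σ_{i=0}^{n} Σ_{j=0}^{m} α_{i,j} · (-1)^{ij} · C(n,i) · C(m-⌊j/2⌋-1, m-j) · C(i-k+⌊j/2⌋, i-2k+j+1), where α_{i,j} = χ(j is odd) + χ(j is even and i = n). -/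
open Finset

/-- auxiliary: standard binomial, 0 for any negative argument -/
def B (a c : ℤ) : ℤ := if 0 ≤ a ∧ 0 ≤ c then ((a.toNat).choose c.toNat : ℤ) else 0

lemma B_neg_left {a c : ℤ} (h : a < 0) : B a c = 0 := by simp [B]; omega

lemma B_neg_right {a c : ℤ} (h : c < 0) : B a c = 0 := by simp [B]; omega

lemma B_zero_right {a : ℤ} (h : 0 ≤ a) : B a 0 = 1 := by simp [B, h]

lemma B_eq_zero_of_lt {a c : ℤ} (h : a < c) : B a c = 0 := by
  unfold B
  split_ifs with h1
  · have : a.toNat < c.toNat := by omega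
    simp [Nat.choose_eq_zero_of_lt this]
  · rfl

lemma B_pascal (a c : ℤ) (h : a = 0 → c ≠ 0) : B a c = B (a-1) c + B (a-1) (c-1) := by
  rcases lt_trichotomy a 0 with ha | ha | ha
  · rw [B_neg_left ha, B_neg_left (by omega), B_neg_left (by omega)]; ring
  · subst ha
    have hc := h rfl
    rw [B_neg_left (by norm_num : (0:ℤ)-1 < 0), B_neg_left (by norm_num : (0:ℤ)-1 < 0)]
    rcases lt_or_gt_of_ne hc with h1 | h1
    · rw [B_neg_right h1]; ring
    · unfold B
      rw [if_pos ⟨le_refl 0, by omega⟩]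
      rw [show (0:ℤ).toNat = 0 from rfl, Nat.choose_eq_zero_of_lt (by omega)]
      simp
  · rcases lt_trichotomy c 0 with hc | hc | hc
    · rw [B_neg_right hc, B_neg_right hc, B_neg_right (by omega)]; ring
    · subst hc
      rw [B_zero_right (by omega), B_zero_right (by omega), B_neg_right (by norm_num)]
      ring
    · unfold B
      rw [if_pos ⟨by omega, by omega⟩, if_pos ⟨by omega, by omega⟩, if_pos ⟨by omega, by omega⟩]
      have h1 : a.toNat = (a-1).toNat + 1 := by omega
      have h2 : c.toNat = (c-1).toNat + 1 := by omega
      rw [h1, h2, Nat.choose_succ_succ]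
      push_cast
      ring

lemma B_symm (a c : ℤ) : B a c = B a (a - c) := by
  rcases lt_trichotomy a 0 with ha | ha | ha
  · rw [B_neg_left ha, B_neg_left ha]
  · subst ha
    rcases lt_trichotomy c 0 with hc | hc | hc
    · rw [B_neg_right hc]
      unfold B
      rw [if_pos ⟨le_refl 0, by omega⟩, show (0:ℤ).toNat = 0 from rfl,
        Nat.choose_eq_zero_of_lt (by omega)]
      simp
    · subst hc; norm_num
    · unfold B
      rw [if_pos ⟨le_refl 0, by omega⟩, if_neg (by omega), show (0:ℤ).toNat = 0 from rfl,
        Nat.choose_eq_zero_of_lt (by omega)]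
      simp
  · rcases lt_trichotomy c 0 with hc | hc | hc
    · rw [B_neg_right hc]
      unfold B
      rw [if_pos ⟨by omega, by omega⟩, Nat.choose_eq_zero_of_lt (by omega)]
      simp
    · subst hc
      rw [B_zero_right (by omega)]
      unfold B
      rw [if_pos ⟨by omega, by omega⟩]
      rw [show (a - 0).toNat = a.toNat by omega, Nat.choose_self]
      norm_num
    · rcases le_or_gt c a with hca | hca
      · unfold B
        rw [if_pos ⟨by omega, by omega⟩, if_pos ⟨by omega, by omega⟩]
        have h1 : (a - c).toNat = a.toNat - c.toNat := by omega
        have h2 : c.toNat ≤ a.toNat := by omega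
        rw [h1, Nat.choose_symm h2]
      · rw [B_eq_zero_of_lt hca, B_neg_right (by omega)]

lemma C_eq_B (a c : ℤ) : C a c = B a c + (if c = 0 ∧ a < 0 then 1 else 0) := by
  by_cases h1 : c = 0
  · subst h1
    rw [show C a 0 = 1 from if_pos rfl]
    by_cases ha : a < 0
    · rw [B_neg_left ha, if_pos ⟨rfl, ha⟩]; norm_num
    · rw [if_neg (by omega : ¬((0:ℤ) = 0 ∧ a < 0)), B_zero_right (by omega)]
      norm_num
  · rw [if_neg (by simp [h1] : ¬(c = 0 ∧ a < 0))]
    unfold C B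
    rw [if_neg h1]
    by_cases h2 : 0 ≤ c ∧ c ≤ a
    · rw [if_pos h2, if_pos ⟨by omega, h2.1⟩]; ring
    · rw [if_neg h2]
      by_cases h3 : 0 ≤ a ∧ 0 ≤ c
      · rw [if_pos h3, Nat.choose_eq_zero_of_lt (by omega)]
        norm_num
      · rw [if_neg h3]; ring

lemma alt_sum_succ (g : ℕ → ℤ) (n : ℕ) :
    ∑ i ∈ range (n+2), (-1:ℤ)^i * ((n+1).choose i : ℤ) * g i
      = ∑ i ∈ range (n+1), (-1:ℤ)^i * ((n).choose i : ℤ) * g i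
        - ∑ i ∈ range (n+1), (-1:ℤ)^i * ((n).choose i : ℤ) * g (i+1) := by
  rw [Finset.sum_range_succ' (fun i => (-1:ℤ)^i * ((n+1).choose i : ℤ) * g i) (n+1)]
  have h1 : ∀ i, (-1:ℤ)^(i+1) * (((n+1).choose (i+1) : ℕ) : ℤ) * g (i+1)
      = -((-1:ℤ)^i * ((n).choose i : ℤ) * g (i+1)) + (-1:ℤ)^(i+1) * ((n).choose (i+1) : ℤ) * g (i+1) := by
    intro i
    rw [Nat.choose_succ_succ]
    push_cast
    ring
  rw [Finset.sum_congr rfl (fun i _ => h1 i), Finset.sum_add_distrib]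
  have h2 : ∑ i ∈ range (n+1), (-1:ℤ)^(i+1) * ((n).choose (i+1) : ℤ) * g (i+1)
      = ∑ i ∈ range (n+2), (-1:ℤ)^i * ((n).choose i : ℤ) * g i
        - (-1:ℤ)^0 * ((n).choose 0 : ℤ) * g 0 := by
    rw [Finset.sum_range_succ' (fun i => (-1:ℤ)^i * ((n).choose i : ℤ) * g i) (n+1)]
    ring
  rw [h2]
  rw [Finset.sum_range_succ (fun i => (-1:ℤ)^i * ((n).choose i : ℤ) * g i) (n+1)]
  rw [Nat.choose_succ_self]
  push_cast
  simp only [Nat.choose_zero_right, Nat.cast_one, Finset.sum_neg_distrib]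
  ring

lemma key (r : ℤ) (hr : 0 ≤ r) : ∀ (n : ℕ) (s : ℤ),
    ∑ i ∈ range (n+1), (-1:ℤ)^i * ((n).choose i : ℤ) * B ((i:ℤ) + s) r =
      if 0 ≤ s then (-1:ℤ)^n * B s (r - (n:ℤ))
      else (-1:ℤ)^(r.toNat) * (-1:ℤ)^((-s).toNat) * B ((n:ℤ) - 1 - r) (-s - 1) := by
  intro n
  induction n with
  | zero =>
    intro s
    simp only [range_one, sum_singleton, pow_zero, Nat.choose_self, Nat.cast_one,
      Nat.cast_zero, one_mul, zero_add]
    split_ifs with hs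
    · norm_num
    · rw [B_neg_left (by omega), B_neg_left (by omega)]
      ring
  | succ n ih =>
    intro s
    have hstep := alt_sum_succ (fun i => B ((i:ℤ) + s) r) n
    rw [hstep]
    have hshift : ∑ i ∈ range (n+1), (-1:ℤ)^i * ((n).choose i : ℤ) * B (((i+1 : ℕ):ℤ) + s) r
        = ∑ i ∈ range (n+1), (-1:ℤ)^i * ((n).choose i : ℤ) * B ((i:ℤ) + (s+1)) r := by
      refine Finset.sum_congr rfl (fun i _ => ?_)
      congr 1
      push_cast
      ring
    rw [hshift, ih s, ih (s+1)]
    rcases lt_trichotomy s (-1) with hs | hs | hs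
    · -- s ≤ -2
      rw [if_neg (by omega), if_neg (by omega), if_neg (by omega)]
      have hp : B ((n:ℤ) + 1 - 1 - r) (-s - 1)
          = B ((n:ℤ) - 1 - r) (-s - 1) + B ((n:ℤ) - 1 - r) (-s - 2) := by
        have := B_pascal ((n:ℤ) - r) (-s - 1) (by omega)
        rw [show (n:ℤ) - r - 1 = (n:ℤ) - 1 - r by ring, show -s - 1 - 1 = -s - 2 by ring] at this
        rw [show (n:ℤ) + 1 - 1 - r = (n:ℤ) - r by ring, this]
      push_cast
      rw [hp]
      have hA : (-s).toNat = (-(s+1)).toNat + 1 := by omega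
      rw [show -(s+1) = -s - 1 by ring] at *
      rw [hA, pow_succ]
      ring
    · -- s = -1
      subst hs
      rw [if_neg (by omega), if_pos (by omega : (0:ℤ) ≤ -1 + 1), if_neg (by omega)]
      push_cast
      rw [show (n:ℤ) + 1 - 1 - r = (n:ℤ) - r by ring]
      rcases lt_trichotomy ((n:ℤ)) r with hn | hn | hn
      · rw [B_neg_left (by omega : (n:ℤ)-1-r < 0), B_neg_left (by omega : (n:ℤ)-r < 0),
          B_eq_zero_of_lt (by omega : (0:ℤ) < r - (n:ℤ))]
        ring
      · rw [B_neg_left (by omega : (n:ℤ)-1-r < 0), show r - (n:ℤ) = 0 by omega,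
          B_zero_right (le_refl 0), show (n:ℤ) - r = 0 by omega, B_zero_right (le_refl 0),
          show r.toNat = n by omega]
        ring
      · rw [B_zero_right (by omega : (0:ℤ) ≤ (n:ℤ)-1-r), B_zero_right (by omega : (0:ℤ) ≤ (n:ℤ)-r),
          B_neg_right (by omega : r - (n:ℤ) < 0)]
        ring
    · -- s ≥ 0
      rw [if_pos (by omega), if_pos (by omega), if_pos (by omega)]
      have hp := B_pascal (s+1) (r - (n:ℤ)) (by omega)
      rw [show s + 1 - 1 = s by ring] at hp
      rw [hp]
      push_cast
      rw [show r - ((n:ℤ)+1) = r - (n:ℤ) - 1 by ring]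
      ring

lemma even_term (n k t : ℕ) :
    C ((n:ℤ) - k + t) ((n:ℤ) - 2*k + 2*t + 1) = B ((n:ℤ) - k + t) ((k:ℤ) - t - 1) := by
  rw [C_eq_B, if_neg (by omega), add_zero, B_symm]
  congr 1
  ring

lemma X_odd (m t : ℕ) : C ((m:ℤ) - t - 1) ((m:ℤ) - (2*t+1)) = B ((m:ℤ) - 1 - t) (t:ℤ) := by
  rw [C_eq_B, if_neg (by omega), add_zero, B_symm]
  congr 1 <;> ring

lemma X_even (m t : ℕ) (hm : 1 ≤ m) :
    C ((m:ℤ) - t - 1) ((m:ℤ) - 2*t) = B ((m:ℤ) - 1 - t) ((t:ℤ) - 1) := by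
  rw [C_eq_B, if_neg (by omega), add_zero, B_symm]
  congr 1 <;> ring

lemma inner_odd (n k t : ℕ) (hk : 1 ≤ k) :
    ∑ i ∈ range (n+1), (-1:ℤ)^i * ((n).choose i : ℤ) * C ((i:ℤ) - k + t) ((i:ℤ) - 2*k + 2*t + 2)
      = B ((n:ℤ) - k + t + 1) ((k:ℤ) - t - 1) := by
  have hterm : ∀ i : ℕ, C ((i:ℤ) - k + t) ((i:ℤ) - 2*k + 2*t + 2)
      = B ((i:ℤ) + ((t:ℤ) - k)) ((k:ℤ) - t - 2)
        + (if ((i:ℤ) - 2*k + 2*t + 2 = 0 ∧ (i:ℤ) - k + t < 0) then 1 else 0) := by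
    intro i
    rw [C_eq_B]
    congr 1
    rw [B_symm]
    congr 1 <;> ring
  have hsplit : ∑ i ∈ range (n+1), (-1:ℤ)^i * ((n).choose i : ℤ) * C ((i:ℤ) - k + t) ((i:ℤ) - 2*k + 2*t + 2)
      = (∑ i ∈ range (n+1), (-1:ℤ)^i * ((n).choose i : ℤ) * B ((i:ℤ) + ((t:ℤ) - k)) ((k:ℤ) - t - 2))
        + ∑ i ∈ range (n+1), (-1:ℤ)^i * ((n).choose i : ℤ) *
            (if ((i:ℤ) - 2*k + 2*t + 2 = 0 ∧ (i:ℤ) - k + t < 0) then 1 else 0) := by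
    rw [← Finset.sum_add_distrib]
    refine Finset.sum_congr rfl (fun i _ => ?_)
    rw [hterm i]
    ring
  rw [hsplit]
  by_cases hA : (t:ℤ) ≤ (k:ℤ) - 2
  · have h1 := key ((k:ℤ) - t - 2) (by omega) n ((t:ℤ) - k)
    rw [if_neg (by omega)] at h1
    have h2 : ∑ i ∈ range (n+1), (-1:ℤ)^i * ((n).choose i : ℤ) *
        (if ((i:ℤ) - 2*k + 2*t + 2 = 0 ∧ (i:ℤ) - k + t < 0) then (1:ℤ) else 0) = 0 :=
      Finset.sum_eq_zero (fun i _ => by rw [if_neg (by omega), mul_zero])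
    rw [h2, add_zero, h1]
    rw [show (-(((t:ℤ) - k))).toNat = ((k:ℤ) - t - 2).toNat + 2 by omega]
    have hsign : ((-1:ℤ))^(((k:ℤ) - t - 2).toNat) * ((-1:ℤ))^(((k:ℤ) - t - 2).toNat + 2) = 1 := by
      rw [← pow_add]
      exact Even.neg_one_pow ⟨((k:ℤ) - t - 2).toNat + 1, by ring⟩
    rw [hsign, one_mul]
    congr 1 <;> ring
  · by_cases hB : (t:ℤ) = (k:ℤ) - 1
    · have h2 : ∑ i ∈ range (n+1), (-1:ℤ)^i * ((n).choose i : ℤ) *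
          B ((i:ℤ) + ((t:ℤ) - k)) ((k:ℤ) - t - 2) = 0 :=
        Finset.sum_eq_zero (fun i _ => by rw [B_neg_right (by omega), mul_zero])
      rw [h2, zero_add]
      rw [Finset.sum_eq_single_of_mem 0 (by simp)
        (fun i _ hi => by rw [if_neg (by omega), mul_zero])]
      rw [if_pos (by constructor <;> (push_cast; omega))]
      rw [show ((k:ℤ) - t - 1) = 0 by omega, B_zero_right (by omega)]
      norm_num
    · have h2 : ∑ i ∈ range (n+1), (-1:ℤ)^i * ((n).choose i : ℤ) *
          B ((i:ℤ) + ((t:ℤ) - k)) ((k:ℤ) - t - 2) = 0 :=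
        Finset.sum_eq_zero (fun i _ => by rw [B_neg_right (by omega), mul_zero])
      have h3 : ∑ i ∈ range (n+1), (-1:ℤ)^i * ((n).choose i : ℤ) *
          (if ((i:ℤ) - 2*k + 2*t + 2 = 0 ∧ (i:ℤ) - k + t < 0) then (1:ℤ) else 0) = 0 :=
        Finset.sum_eq_zero (fun i _ => by rw [if_neg (by omega), mul_zero])
      rw [h2, h3, B_neg_right (by omega)]
      norm_num

def G (M : ℕ) (n k : ℤ) : ℤ := ∑ t ∈ range (M+1), B ((M:ℤ) - t) (t:ℤ) * B (n - k + t) (k - 1 - t)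

lemma G0 (n k : ℤ) : G 0 n k = B (n-k) (k-1) := by
  unfold G
  rw [Finset.sum_range_one]
  push_cast
  norm_num
  rw [B_zero_right (le_refl 0), one_mul]

lemma G1 (n k : ℤ) : G 1 n k = B (n-k) (k-1) := by
  unfold G
  rw [Finset.sum_range_succ, Finset.sum_range_one]
  push_cast
  rw [B_zero_right (by norm_num : (0:ℤ) ≤ 1), B_eq_zero_of_lt (by norm_num : (0:ℤ) < 1)]
  rw [one_mul, zero_mul, add_zero]
  congr 1 <;> ring

lemma Grec (M : ℕ) (n k : ℤ) : G (M+2) n k = G (M+1) n k + G M n (k-1) := by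
  unfold G
  push_cast
  have h1 : ∀ t : ℕ, B ((M:ℤ) + 2 - t) (t:ℤ) = B ((M:ℤ) + 1 - t) (t:ℤ) + B ((M:ℤ) + 1 - t) ((t:ℤ) - 1) := by
    intro t
    have h := B_pascal ((M:ℤ) + 2 - t) (t:ℤ) (by omega)
    rw [show (M:ℤ) + 2 - t - 1 = (M:ℤ) + 1 - t by ring] at h
    exact h
  rw [Finset.sum_congr rfl (fun t _ => by rw [h1 t, add_mul])]
  rw [Finset.sum_add_distrib]
  congr 1
  · rw [Finset.sum_range_succ]
    rw [B_neg_left (by push_cast; omega : (M:ℤ) + 1 - ((M+2:ℕ):ℤ) < 0), zero_mul, add_zero]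
  · rw [Finset.sum_range_succ' _ (M+2)]
    rw [show ((0:ℕ):ℤ) - 1 = -1 by norm_num]
    rw [B_neg_right (by norm_num : (-1:ℤ) < 0), zero_mul, add_zero]
    rw [Finset.sum_range_succ]
    rw [B_neg_left (by push_cast; omega : (M:ℤ) + 1 - (((M+1)+1:ℕ):ℤ) < 0), zero_mul, add_zero]
    refine Finset.sum_congr rfl (fun t _ => ?_)
    push_cast
    rw [show (M:ℤ) + 1 - (t + 1) = (M:ℤ) - t by ring, show ((t:ℤ) + 1) - 1 = (t:ℤ) by ring]
    congr 1
    congr 1 <;> ring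

lemma Gk1 (M : ℕ) (n : ℤ) (hn : 1 ≤ n) : G M n 1 = 1 := by
  unfold G
  rw [Finset.sum_range_succ' _ M]
  have h1 : ∀ t ∈ range M, B ((M:ℤ) - ((t+1:ℕ):ℤ)) ((t+1:ℕ):ℤ) * B (n - 1 + ((t+1:ℕ):ℤ)) (1 - 1 - ((t+1:ℕ):ℤ)) = 0 := by
    intro t _
    rw [B_neg_right (by push_cast; omega : (1:ℤ) - 1 - ((t+1:ℕ):ℤ) < 0), mul_zero]
  rw [Finset.sum_eq_zero h1, zero_add]
  push_cast
  rw [B_zero_right (by omega : (0:ℤ) ≤ (M:ℤ) - 0), B_zero_right (by omega : (0:ℤ) ≤ n - 1 + 0)]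
  norm_num

lemma Gk0 (M : ℕ) (n : ℤ) : G M n 0 = 0 := by
  unfold G
  refine Finset.sum_eq_zero (fun t _ => ?_)
  rw [B_neg_right (by omega : (0:ℤ) - 1 - (t:ℤ) < 0), mul_zero]

lemma mainG : ∀ (M : ℕ) (n k : ℤ), 1 ≤ n → 1 ≤ k →
    G (M+1) n k + G M (n-1) (k-1) = B ((M:ℤ) + 1 + n - k) (k-1) := by
  intro M
  induction M using Nat.strong_induction_on with
  | _ M ih =>
    intro n k hn hk
    rcases eq_or_lt_of_le hk with hk1 | hk2
    · rw [← hk1, Gk1 _ n hn, show (1:ℤ) - 1 = 0 by ring, Gk0,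
        B_zero_right (by omega : (0:ℤ) ≤ (M:ℤ) + 1 + n - 1)]
      norm_num
    · have hk' : 2 ≤ k := hk2
      match M with
      | 0 =>
        rw [G1, G0]
        rw [show n - 1 - (k - 1) = n - k by ring]
        have h := B_pascal (n - k + 1) (k - 1) (by omega)
        rw [show n - k + 1 - 1 = n - k by ring, show k - 1 - 1 = k - 2 by ring] at h
        rw [show ((0:ℕ):ℤ) + 1 + n - k = n - k + 1 by push_cast; ring, h]
        rw [show k - 1 - 1 = k - 2 by ring]
      | 1 =>
        rw [show (1+1 : ℕ) = 2 from rfl, Grec 0 n k, G1, G0, G1]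
        rw [show n - (k-1) = n - k + 1 by ring, show n - 1 - (k - 1) = n - k by ring]
        have h1 := B_pascal (n - k + 1) (k - 1) (by omega)
        rw [show n - k + 1 - 1 = n - k by ring, show k - 1 - 1 = k - 2 by ring] at h1
        have h2 := B_pascal (n - k + 2) (k - 1) (by omega)
        rw [show n - k + 2 - 1 = n - k + 1 by ring, show k - 1 - 1 = k - 2 by ring] at h2
        rw [show ((1:ℕ):ℤ) + 1 + n - k = n - k + 2 by push_cast; ring, h2, h1]
        rw [show (k-1) - 1 = k - 2 by ring]
        ring
      | (M+2) =>
        rw [show M+2+1 = (M+1)+2 by ring, Grec (M+1) n k, Grec M (n-1) (k-1)]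
        have e1 := ih (M+1) (by omega) n k hn hk
        have e2 := ih M (by omega) n (k-1) hn (by omega)
        rw [show G (M+1+1) n k = G (M+2) n k from rfl] at e1
        have : G (M + 2) n k + G (M + 1) n (k - 1) + (G (M + 1) (n - 1) (k - 1) + G M (n - 1) (k - 1 - 1))
            = (G (M+2) n k + G (M+1) (n-1) (k-1)) + (G (M+1) n (k-1) + G M (n-1) (k-1-1)) := by ring
        rw [this, e1]
        rw [show k - 1 - 1 = (k-1) - 1 by ring, e2]
        have h := B_pascal ((M:ℤ) + 2 + 1 + n - k) (k-1) (by omega)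
        rw [show (M:ℤ) + 2 + 1 + n - k - 1 = (M:ℤ) + 2 + n - k by ring,
          show k - 1 - 1 = k - 2 by ring] at h
        rw [show (((M+2):ℕ):ℤ) + 1 + n - k = (M:ℤ) + 2 + 1 + n - k by push_cast; ring, h]
        rw [show (((M+1):ℕ):ℤ) + 1 + n - k = (M:ℤ) + 2 + n - k by push_cast; ring,
          show (M:ℤ) + 1 + n - (k-1) = (M:ℤ) + 2 + n - k by ring,
          show (k-1) - 1 = k - 2 by ring]

lemma sum_parity (f : ℕ → ℤ) : ∀ M : ℕ, ∑ j ∈ range M, f j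
    = (∑ t ∈ range ((M+1)/2), f (2*t)) + ∑ t ∈ range (M/2), f (2*t+1) := by
  intro M
  induction M with
  | zero => simp
  | succ M ih =>
    rw [Finset.sum_range_succ, ih]
    rcases Nat.even_or_odd M with ⟨u, hu⟩ | ⟨u, hu⟩
    · subst hu
      rw [show (u+u+1+1)/2 = u+1 by omega, show (u+u+1)/2 = u by omega,
        show (u+u)/2 = u by omega]
      rw [Finset.sum_range_succ (fun t => f (2*t)) u]
      rw [show 2*u = u+u by ring]
      ring
    · subst hu
      rw [show (2*u+1+1+1)/2 = u+1 by omega, show (2*u+1+1)/2 = u+1 by omega,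
        show (2*u+1)/2 = u by omega]
      rw [Finset.sum_range_succ (fun t => f (2*t+1)) u]
      ring

def F (m n k : ℕ) (j : ℕ) : ℤ :=
  if Odd j then B ((m:ℤ)-1-(j/2 : ℕ)) ((j/2 : ℕ) : ℤ) * B ((n:ℤ)-(k:ℤ)+(j/2 : ℕ)+1) ((k:ℤ)-(j/2 : ℕ)-1)
  else B ((m:ℤ)-1-(j/2 : ℕ)) (((j/2 : ℕ):ℤ)-1) * B ((n:ℤ)-(k:ℤ)+(j/2 : ℕ)) ((k:ℤ)-(j/2 : ℕ)-1)

lemma inner_eval (m n k : ℕ) (hm : 1 ≤ m) (hk : 1 ≤ k) (j : ℕ) :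
    ∑ i ∈ range (n+1), ((if Odd j then 1 else 0) + (if Even j ∧ i = n then 1 else 0) : ℤ) *
          (-1) ^ (i * j) * (n.choose i : ℤ) *
          C ((m : ℤ) - (j : ℤ) / 2 - 1) ((m : ℤ) - j) *
          C ((i : ℤ) - k + (j : ℤ) / 2) ((i : ℤ) - 2 * k + j + 1)
      = F m n k j := by
  rcases Nat.even_or_odd j with he | ho
  · -- even case
    obtain ⟨t, ht⟩ := he
    have ht' : j = 2*t := by omega
    clear ht; subst ht'
    have hOdd : ¬ Odd (2*t) := by rw [Nat.odd_iff]; omega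
    have hEven : Even (2*t) := by rw [Nat.even_iff]; omega
    have hcast : ((2*t : ℕ) : ℤ) = 2*(t:ℤ) := by push_cast; ring
    have hstep : ∀ i ∈ range (n+1),
        ((if Odd (2*t) then 1 else 0) + (if Even (2*t) ∧ i = n then 1 else 0) : ℤ) *
          (-1) ^ (i * (2*t)) * (n.choose i : ℤ) *
          C ((m : ℤ) - ((2*t : ℕ) : ℤ) / 2 - 1) ((m : ℤ) - (2*t : ℕ)) *
          C ((i : ℤ) - k + ((2*t : ℕ) : ℤ) / 2) ((i : ℤ) - 2 * k + (2*t : ℕ) + 1)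
        = if i = n then ((-1:ℤ)) ^ (i * (2*t)) * (n.choose i : ℤ) *
            C ((m : ℤ) - ((2*t : ℕ) : ℤ) / 2 - 1) ((m : ℤ) - (2*t : ℕ)) *
            C ((i : ℤ) - k + ((2*t : ℕ) : ℤ) / 2) ((i : ℤ) - 2 * k + (2*t : ℕ) + 1) else 0 := by
      intro i _
      by_cases hi : i = n
      · rw [if_pos hi, if_neg hOdd, if_pos ⟨hEven, hi⟩]
        ring
      · rw [if_neg hi, if_neg hOdd, if_neg (by tauto : ¬(Even (2*t) ∧ i = n))]
        ring
    rw [Finset.sum_congr rfl hstep]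
    rw [Finset.sum_ite_eq' (range (n+1)) n]
    rw [if_pos (Finset.self_mem_range_succ n)]
    rw [Even.neg_one_pow (⟨n*t, by ring⟩ : Even (n*(2*t))), Nat.choose_self]
    rw [hcast, show (m:ℤ) - 2*(t:ℤ)/2 - 1 = (m:ℤ) - t - 1 by omega]
    rw [show ((n:ℤ) - k + 2*(t:ℤ)/2) = (n:ℤ) - k + t by omega]
    rw [show ((n:ℤ) - 2*k + 2*(t:ℤ) + 1) = (n:ℤ) - 2*k + 2*t + 1 by ring]
    rw [X_even m t hm, even_term n k t]
    unfold F
    rw [if_neg hOdd, show (2*t)/2 = t by omega]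
    push_cast
    ring
  · -- odd case
    obtain ⟨t, ht⟩ := ho
    subst ht
    have hOdd : Odd (2*t+1) := ⟨t, rfl⟩
    have hEven : ¬ Even (2*t+1) := by rw [Nat.even_iff]; omega
    have hcast : ((2*t+1 : ℕ) : ℤ) = 2*(t:ℤ)+1 := by push_cast; ring
    have hstep : ∀ i ∈ range (n+1),
        ((if Odd (2*t+1) then 1 else 0) + (if Even (2*t+1) ∧ i = n then 1 else 0) : ℤ) *
          (-1) ^ (i * (2*t+1)) * (n.choose i : ℤ) *
          C ((m : ℤ) - ((2*t+1 : ℕ) : ℤ) / 2 - 1) ((m : ℤ) - (2*t+1 : ℕ)) *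
          C ((i : ℤ) - k + ((2*t+1 : ℕ) : ℤ) / 2) ((i : ℤ) - 2 * k + (2*t+1 : ℕ) + 1)
        = B ((m:ℤ) - 1 - t) (t:ℤ) *
            ((-1:ℤ)^i * (n.choose i : ℤ) * C ((i:ℤ) - k + t) ((i:ℤ) - 2*k + 2*t + 2)) := by
      intro i _
      rw [if_pos hOdd, if_neg (by tauto : ¬(Even (2*t+1) ∧ i = n))]
      rw [mul_comm i (2*t+1), pow_mul, Odd.neg_one_pow hOdd]
      rw [hcast, show ((m:ℤ) - (2*(t:ℤ)+1)/2 - 1) = (m:ℤ) - t - 1 by omega]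
      rw [show ((i:ℤ) - k + (2*(t:ℤ)+1)/2) = (i:ℤ) - k + t by omega]
      rw [show ((i:ℤ) - 2*k + (2*(t:ℤ)+1) + 1) = (i:ℤ) - 2*k + 2*t + 2 by ring]
      rw [show ((m:ℤ) - (2*(t:ℤ)+1)) = (m:ℤ) - (2*t+1) by push_cast; ring]
      rw [X_odd m t]
      ring
    rw [Finset.sum_congr rfl hstep, ← Finset.mul_sum, inner_odd n k t hk]
    unfold F
    rw [if_pos hOdd, show (2*t+1)/2 = t by omega]

theorem binom_identity_2 (m n k : ℕ) (hm : 1 ≤ m) (hn : 1 ≤ n) (hk : 1 ≤ k) :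
    C ((m : ℤ) + n - k) ((k : ℤ) - 1) =
      ∑ i ∈ range (n + 1), ∑ j ∈ range (m + 1),
        ((if Odd j then 1 else 0) + (if Even j ∧ i = n then 1 else 0) : ℤ) *
          (-1) ^ (i * j) * (n.choose i : ℤ) *
          C ((m : ℤ) - (j : ℤ) / 2 - 1) ((m : ℤ) - j) *
          C ((i : ℤ) - k + (j : ℤ) / 2) ((i : ℤ) - 2 * k + j + 1) := by
  rw [Finset.sum_comm]
  rw [Finset.sum_congr rfl (fun j _ => inner_eval m n k hm hk j)]
  rw [sum_parity (F m n k) (m+1)]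
  -- extend ranges
  have ext1 : ∑ t ∈ range ((m+1+1)/2), F m n k (2*t) = ∑ t ∈ range (m+1), F m n k (2*t) := by
    refine Finset.sum_subset (Finset.range_subset_range.mpr (by omega)) (fun t _ ht2 => ?_)
    have h2t : m + 1 ≤ 2*t := by
      simp only [Finset.mem_range] at ht2
      omega
    unfold F
    rw [if_neg (by rw [Nat.odd_iff]; omega), show (2*t)/2 = t by omega]
    rw [B_eq_zero_of_lt (by push_cast; omega : (m:ℤ) - 1 - t < (t:ℤ) - 1), zero_mul]
  have ext2 : ∑ t ∈ range ((m+1)/2), F m n k (2*t+1) = ∑ t ∈ range (m+1), F m n k (2*t+1) := by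
    refine Finset.sum_subset (Finset.range_subset_range.mpr (by omega)) (fun t _ ht2 => ?_)
    have h2t : m + 1 ≤ 2*t+1 := by
      simp only [Finset.mem_range] at ht2
      omega
    unfold F
    rw [if_pos ⟨t, rfl⟩, show (2*t+1)/2 = t by omega]
    rw [B_eq_zero_of_lt (by push_cast; omega : (m:ℤ) - 1 - t < (t:ℤ)), zero_mul]
  rw [ext1, ext2]
  -- combine
  have hcomb : (∑ t ∈ range (m+1), F m n k (2*t)) + ∑ t ∈ range (m+1), F m n k (2*t+1)
      = G m n k + G (m-1) (n-1) (k-1) := by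
    have step1 : (∑ t ∈ range (m+1), F m n k (2*t)) + ∑ t ∈ range (m+1), F m n k (2*t+1)
        = ∑ t ∈ range (m+1), (B ((m:ℤ) - t) (t:ℤ) * B ((n:ℤ) - k + t) ((k:ℤ) - 1 - t)
            + B ((m:ℤ) - 1 - t) (t:ℤ) * B ((n:ℤ) - k + t) ((k:ℤ) - t - 2)) := by
      rw [← Finset.sum_add_distrib]
      refine Finset.sum_congr rfl (fun t _ => ?_)
      unfold F
      rw [if_neg (by rw [Nat.odd_iff]; omega), if_pos ⟨t, rfl⟩,
        show (2*t)/2 = t by omega, show (2*t+1)/2 = t by omega]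
      have hp1 := B_pascal ((n:ℤ) - k + t + 1) ((k:ℤ) - t - 1) (by omega)
      rw [show (n:ℤ) - k + t + 1 - 1 = (n:ℤ) - k + t by ring,
        show (k:ℤ) - t - 1 - 1 = (k:ℤ) - t - 2 by ring] at hp1
      have hp2 := B_pascal ((m:ℤ) - t) (t:ℤ) (by omega)
      rw [show (m:ℤ) - t - 1 = (m:ℤ) - 1 - t by ring] at hp2
      rw [hp1, hp2]
      rw [show (k:ℤ) - 1 - t = (k:ℤ) - t - 1 by ring]
      ring
    rw [step1, Finset.sum_add_distrib]
    congr 1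
    unfold G
    rw [show (m-1)+1 = m by omega]
    rw [Finset.sum_range_succ]
    rw [B_eq_zero_of_lt (by push_cast; omega : (m:ℤ) - 1 - m < (m:ℤ)), zero_mul, add_zero]
    refine Finset.sum_congr rfl (fun t _ => ?_)
    rw [show ((m-1 : ℕ):ℤ) = (m:ℤ) - 1 by omega]
    congr 1
    congr 1 <;> ring
  rw [hcomb]
  have hmain := mainG (m-1) n (k:ℤ) (by omega) (by omega)
  rw [show (m-1)+1 = m by omega] at hmain
  rw [hmain]
  rw [C_eq_B, if_neg (by omega), add_zero]
  congr 1
  omega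
end

section
/- For all integers n ≥ k ≥ 1: Σ_{i=k}^{n} (-1)^{i} · C(n,i) · C(i-⌊k/2⌋-1, i-k) = (-1)^{k} · C(n-⌈k/2⌉, ⌊k/2⌋). -/
open Finset

lemma C_natCast (a b : ℕ) (h : b ≤ a) : C a b = (a.choose b : ℤ) := by
  unfold C
  rcases eq_or_ne b 0 with rfl | hb
  · simp
  · have hb' : (b : ℤ) ≠ 0 := by exact_mod_cast hb
    simp [hb', hb, Int.ofNat_le.mpr h]

lemma trinom (n a j : ℕ) :
    n.choose (a + j) * (a + j).choose j = n.choose a * (n - a).choose j := by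
  by_cases h : a + j ≤ n
  · have h1 := Nat.choose_mul (n := n) (Nat.le_add_right a j)
    rw [Nat.add_sub_cancel_left] at h1
    rw [← Nat.choose_symm_add]
    exact h1
  · rw [Nat.choose_eq_zero_of_lt (by omega)]
    rcases le_or_gt a n with ha | ha
    · rw [Nat.choose_eq_zero_of_lt (show n - a < j by omega), mul_zero, zero_mul]
    · rw [Nat.choose_eq_zero_of_lt ha, zero_mul, zero_mul]

lemma Skey (c : ℕ) (hc : 1 ≤ c) : ∀ n k : ℕ, c ≤ k → k ≤ n →
    ∑ j ∈ range (n - k + 1), (-1 : ℤ) ^ j * (n.choose (k + j)) * ((c - 1 + j).choose j)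
      = ((n - c).choose (n - k) : ℤ) := by
  intro n
  induction n with
  | zero => intro k hck hkn; omega
  | succ n ih =>
    intro k hck hkn
    by_cases hk : k = n + 1
    · subst hk
      simp [Nat.sub_self]
    · have hkn' : k ≤ n := by omega
      obtain ⟨k', rfl⟩ : ∃ k', k = k' + 1 := ⟨k - 1, by omega⟩
      have hrange : n + 1 - (k' + 1) + 1 = n - k' + 1 := by omega
      rw [hrange]
      have hsplit : ∀ j : ℕ,
          (-1 : ℤ) ^ j * ((n+1).choose (k' + 1 + j)) * ((c - 1 + j).choose j)
          = (-1 : ℤ) ^ j * (n.choose (k' + j)) * ((c - 1 + j).choose j)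
            + (-1 : ℤ) ^ j * (n.choose (k' + 1 + j)) * ((c - 1 + j).choose j) := by
        intro j
        have : k' + 1 + j = (k' + j) + 1 := by omega
        rw [this, Nat.choose_succ_succ]
        push_cast
        ring
      rw [Finset.sum_congr rfl (fun j _ => hsplit j), Finset.sum_add_distrib]
      have hB : ∑ j ∈ range (n - k' + 1),
          (-1 : ℤ) ^ j * (n.choose (k' + 1 + j)) * ((c - 1 + j).choose j)
          = ((n - c).choose (n - (k' + 1)) : ℤ) := by
        have h1 : n - k' + 1 = (n - (k' + 1) + 1) + 1 := by omega
        rw [h1, Finset.sum_range_succ]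
        have h2 : k' + 1 + (n - (k' + 1) + 1) = n + 1 := by omega
        rw [h2, Nat.choose_succ_self]
        simpa using ih (k' + 1) hck hkn'
      rw [hB]
      by_cases hck' : c ≤ k'
      · have hA := ih k' hck' (by omega)
        rw [hA]
        have e1 : n + 1 - c = (n - c) + 1 := by omega
        have e2 : n + 1 - (k' + 1) = (n - (k' + 1)) + 1 := by omega
        have e3 : n - k' = (n - (k' + 1)) + 1 := by omega
        rw [e1, e2, e3]
        norm_cast
        rw [Nat.choose_succ_succ]
        simp only [Nat.succ_eq_add_one]
        omega
      · have hkc : k' + 1 = c := by omega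
        have hA : ∑ j ∈ range (n - k' + 1),
            (-1 : ℤ) ^ j * (n.choose (k' + j)) * ((c - 1 + j).choose j) = 0 := by
          have hk'c : k' = c - 1 := by omega
          subst hk'c
          have : ∀ j : ℕ, (-1 : ℤ) ^ j * (n.choose (c - 1 + j)) * ((c - 1 + j).choose j)
              = (n.choose (c - 1) : ℤ) * ((-1 : ℤ) ^ j * ((n - (c - 1)).choose j)) := by
            intro j
            have h' : ((n.choose (c - 1 + j) : ℤ)) * (((c - 1 + j).choose j : ℤ)) =
                (n.choose (c - 1) : ℤ) * (((n - (c - 1)).choose j : ℤ)) := by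
              exact_mod_cast congrArg (Nat.cast : ℕ → ℤ) (trinom n (c - 1) j)
            linear_combination ((-1 : ℤ) ^ j) * h'
          rw [Finset.sum_congr rfl (fun j _ => this j), ← Finset.mul_sum]
          have hr : n - (c - 1) + 1 = (n - (c - 1)) + 1 := rfl
          have hne : n - (c - 1) ≠ 0 := by omega
          rw [show n - (c - 1) + 1 = n - (c-1) + 1 from rfl]
          rw [Int.alternating_sum_range_choose_of_ne hne, mul_zero]
        rw [hA, zero_add]
        rw [show n - (k' + 1) = n - c from by omega,
          show n + 1 - (k' + 1) = n + 1 - c from by omega, Nat.choose_self, Nat.choose_self]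
  
theorem alternating_binom_sum (n k : ℕ) (hk : 1 ≤ k) (hkn : k ≤ n) :
    ∑ i ∈ Icc k n, (-1 : ℤ) ^ i * (n.choose i : ℤ) *
        C ((i : ℤ) - (k : ℤ) / 2 - 1) ((i : ℤ) - k) =
      (-1) ^ k * C ((n : ℤ) - ((k : ℤ) + 1) / 2) ((k : ℤ) / 2) := by
  set m := k / 2 with hm
  set c := (k + 1) / 2 with hc
  have hmc : m + c = k := by omega
  have hc1 : 1 ≤ c := by omega
  have hck : c ≤ k := by omega
  have hdiv : (k : ℤ) / 2 = (m : ℤ) := by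
    rw [hm]; exact_mod_cast (Int.natCast_div k 2).symm
  have hdiv2 : ((k : ℤ) + 1) / 2 = (c : ℤ) := by
    rw [hc]
    have : ((k : ℤ) + 1) = ((k + 1 : ℕ) : ℤ) := by push_cast; ring
    rw [this]
    exact_mod_cast (Int.natCast_div (k + 1) 2).symm
  -- rewrite RHS
  have hRHS : C ((n : ℤ) - ((k : ℤ) + 1) / 2) ((k : ℤ) / 2) = ((n - c).choose m : ℤ) := by
    rw [hdiv, hdiv2, show (n : ℤ) - (c : ℤ) = ((n - c : ℕ) : ℤ) from by
      push_cast [Nat.cast_sub (hck.trans hkn)]; ring]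
    exact C_natCast _ _ (by omega)
  rw [hRHS]
  -- rewrite LHS sum
  rw [show Icc k n = Ico k (n + 1) from by rw [Finset.Ico_add_one_right_eq_Icc],
    Finset.sum_Ico_eq_sum_range]
  have hterm : ∀ j ∈ range (n + 1 - k),
      (-1 : ℤ) ^ (k + j) * (n.choose (k + j) : ℤ) *
        C (((k + j : ℕ) : ℤ) - (k : ℤ) / 2 - 1) (((k + j : ℕ) : ℤ) - k)
      = (-1 : ℤ) ^ k * ((-1 : ℤ) ^ j * (n.choose (k + j)) * ((c - 1 + j).choose j)) := by
    intro j _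
    have h1 : ((k + j : ℕ) : ℤ) - (k : ℤ) / 2 - 1 = ((c - 1 + j : ℕ) : ℤ) := by
      rw [hdiv]; push_cast [Nat.cast_sub hc1]; omega
    have h2 : ((k + j : ℕ) : ℤ) - (k : ℤ) = ((j : ℕ) : ℤ) := by push_cast; ring
    rw [h1, h2, C_natCast _ _ (by omega), pow_add]
    ring
  rw [Finset.sum_congr rfl hterm, ← Finset.mul_sum]
  congr 1
  have hS := Skey c hc1 n k hck hkn
  rw [show n + 1 - k = n - k + 1 from by omega, hS,
    Nat.choose_symm_of_eq_add (show n - c = (n - k) + m from by omega)]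
end

section
/- For all integers m, n, k ≥ 0, in the field ℚ(q) of rational functions: qbinom(m+n,k)·qbinom(m+n+1,n) − qbinom(m,k)·qbinom(k+m+n+1,n) = Σ_{i=1}^{n} Σ_{j=1}^{k} q^{i(j+m+1) − 2j(k-j+1)} · qbinom(m,j-1) · qbinom(k+1,j) · qbinom(i-1,k-j) · qbinom(m+n+j-i,n-i), where the exponent of q may be a negative integer. -/
open Finset

/-- The q-binomial coefficient in the field ℚ(q) of rational functions. -/
noncomputable def qbinomF : ℕ → ℕ → RatFunc ℚ
  | _, 0 => 1
  | 0, _ + 1 => 0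
  | n + 1, k + 1 => qbinomF n k + RatFunc.X ^ (k + 1) * qbinomF n (k + 1)

namespace QBaux

local notation "Xq" => (RatFunc.X : RatFunc ℚ)

lemma Xq_ne_zero : Xq ≠ 0 := RatFunc.X_ne_zero

lemma qb_zero (n : ℕ) : qbinomF n 0 = 1 := by cases n <;> rfl

lemma qb_succ (n k : ℕ) :
    qbinomF (n+1) (k+1) = qbinomF n k + Xq ^ (k+1) * qbinomF n (k+1) := rfl

lemma qb_eq_zero : ∀ n k, n < k → qbinomF n k = 0
  | 0, _+1, _ => rfl
  | n+1, k+1, h => by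
    rw [qb_succ, qb_eq_zero n k (by omega), qb_eq_zero n (k+1) (by omega)]
    ring

lemma qb_diag : ∀ n, qbinomF n n = 1
  | 0 => rfl
  | n+1 => by
    rw [qb_succ, qb_diag n, qb_eq_zero n (n+1) (by omega)]
    ring

noncomputable def qint (n : ℕ) : RatFunc ℚ := ∑ i ∈ range n, Xq ^ i

noncomputable def qfact : ℕ → RatFunc ℚ
  | 0 => 1
  | n + 1 => qfact n * qint (n+1)

lemma qint_ne_zero {n : ℕ} (h : 1 ≤ n) : qint n ≠ 0 := by
  have heq : qint n = algebraMap (Polynomial ℚ) (RatFunc ℚ) (∑ i ∈ range n, Polynomial.X ^ i) := by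
    rw [map_sum]
    simp [qint, RatFunc.algebraMap_X]
  rw [heq]
  intro hz
  have hz' : (∑ i ∈ range n, (Polynomial.X : Polynomial ℚ) ^ i) = 0 :=
    RatFunc.algebraMap_injective ℚ (by simpa using hz)
  have := congrArg (Polynomial.eval 0) hz'
  rw [Polynomial.eval_finset_sum] at this
  rw [Finset.sum_eq_single 0 (by intro b _ hb; simp [Polynomial.eval_pow, zero_pow hb])
    (by intro h2; exact absurd (Finset.mem_range.mpr (by omega)) h2)] at this
  simp at this

lemma qfact_ne_zero : ∀ n, qfact n ≠ 0
  | 0 => one_ne_zero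
  | n+1 => mul_ne_zero (qfact_ne_zero n) (qint_ne_zero (by omega))

lemma qint_split (k n : ℕ) (h : k ≤ n) :
    qint (n+1) = qint (k+1) + Xq ^ (k+1) * qint (n - k) := by
  unfold qint
  rw [show n+1 = (k+1) + (n-k) by omega, Finset.sum_range_add, Finset.mul_sum]
  congr 1
  exact Finset.sum_congr rfl fun i _ => by rw [← pow_add]

lemma qb_fact : ∀ n k, k ≤ n → qbinomF n k * (qfact k * qfact (n - k)) = qfact n
  | 0, 0, _ => by simp [qb_zero, qfact]
  | n+1, 0, _ => by simp [qb_zero, qfact]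
  | n+1, k+1, h => by
    rcases Nat.lt_or_ge (k+1) (n+1) with h' | h'
    · obtain ⟨a, rfl⟩ : ∃ a, n = k + 1 + a := ⟨n - (k+1), by omega⟩
      have ih1 := qb_fact (k+1+a) k (by omega)
      rw [show k+1+a-k = a+1 by omega] at ih1
      have ih2 := qb_fact (k+1+a) (k+1) (by omega)
      rw [show k+1+a-(k+1) = a by omega] at ih2
      rw [show k+1+a+1-(k+1) = a+1 by omega, qb_succ]
      have split := qint_split k (k+1+a) (by omega)
      rw [show k+1+a-k = a+1 by omega] at split
      rw [show qfact (k+1) = qfact k * qint (k+1) from rfl,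
          show qfact (a+1) = qfact a * qint (a+1) from rfl] at *
      rw [show qfact (k+1+a+1) = qfact (k+1+a) * qint (k+1+a+1) from rfl, split]
      linear_combination qint (k+1) * ih1 + Xq^(k+1) * qint (a+1) * ih2
    · obtain rfl : k = n := by omega
      rw [qb_diag, Nat.sub_self]
      simp [qfact]

lemma qb_symm {n k : ℕ} (h : k ≤ n) : qbinomF n k = qbinomF n (n - k) := by
  have h1 := qb_fact n k h
  have h2 := qb_fact n (n-k) (by omega)
  rw [show n - (n-k) = k by omega] at h2
  have hk := qfact_ne_zero k
  have hnk := qfact_ne_zero (n-k)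
  exact mul_right_cancel₀ (mul_ne_zero hk hnk) (by linear_combination h1 - h2)

lemma qb_trinom {a b c : ℕ} (hc : c ≤ b) (hb : b ≤ a) :
    qbinomF a b * qbinomF b c = qbinomF a c * qbinomF (a - c) (b - c) := by
  have h1 := qb_fact a b hb
  have h2 := qb_fact b c hc
  have h3 := qb_fact a c (le_trans hc hb)
  have h4 := qb_fact (a-c) (b-c) (by omega)
  rw [show a - c - (b - c) = a - b by omega] at h4
  have n1 := qfact_ne_zero b
  have n2 := qfact_ne_zero c
  have n3 := qfact_ne_zero (a-b)
  have n4 := qfact_ne_zero (b-c)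
  have n5 := qfact_ne_zero (a-c)
  have key : (qbinomF a b * qbinomF b c) * (qfact c * qfact (b-c) * qfact (a-b)) = qfact a := by
    calc (qbinomF a b * qbinomF b c) * (qfact c * qfact (b-c) * qfact (a-b))
        = qbinomF a b * (qfact b * qfact (a-b)) * (qbinomF b c * (qfact c * qfact (b-c))) / qfact b := by
          field_simp
      _ = qfact a * qfact b / qfact b := by rw [h1, h2]
      _ = qfact a := by field_simp
  have key2 : (qbinomF a c * qbinomF (a-c) (b-c)) * (qfact c * qfact (b-c) * qfact (a-b)) = qfact a := by
    calc (qbinomF a c * qbinomF (a-c) (b-c)) * (qfact c * qfact (b-c) * qfact (a-b))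
        = qbinomF a c * (qfact c * qfact (a-c)) * (qbinomF (a-c) (b-c) * (qfact (b-c) * qfact (a-b))) / qfact (a-c) := by
          field_simp
      _ = qfact a * qfact (a-c) / qfact (a-c) := by rw [h3, h4]
      _ = qfact a := by field_simp
  exact mul_right_cancel₀ (mul_ne_zero (mul_ne_zero n2 n4) n3) (key.trans key2.symm)

lemma vdm (A B N : ℕ) :
    qbinomF (A+B) N = ∑ u ∈ range (N+1), Xq ^ ((A-u)*(N-u)) * qbinomF A u * qbinomF B (N-u) := by
  induction A generalizing N with
  | zero =>
    rw [Finset.sum_eq_single 0 (fun b _ hb => by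
        rw [qb_eq_zero 0 b (by omega)]; ring)
      (fun h => absurd (mem_range.mpr (by omega)) h)]
    simp [qb_zero]
  | succ A IH =>
    cases N with
    | zero => simp [qb_zero]
    | succ N =>
      have key : ∀ i ∈ range (N+1),
          Xq ^ ((A+1-(i+1))*(N+1-(i+1))) * qbinomF (A+1) (i+1) * qbinomF B (N+1-(i+1))
          = Xq ^ ((A-i)*(N-i)) * qbinomF A i * qbinomF B (N-i)
            + Xq^(N+1) * (Xq ^ ((A-(i+1))*(N+1-(i+1))) * qbinomF A (i+1) * qbinomF B (N+1-(i+1))) := by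
        intro i hi
        simp only [mem_range] at hi
        rw [show A+1-(i+1) = A-i by omega, show N+1-(i+1) = N-i by omega, qb_succ]
        rcases Nat.lt_or_ge i A with hA | hA
        · obtain ⟨a, rfl⟩ : ∃ a, A = i+1+a := ⟨A-i-1, by omega⟩
          obtain ⟨c, rfl⟩ : ∃ c, N = i+c := ⟨N-i, by omega⟩
          rw [show i+1+a-i = a+1 by omega, show i+c-i = c by omega,
              show i+1+a-(i+1) = a by omega]
          have hp : Xq^((a+1)*c) * Xq^(i+1) = Xq^(i+c+1) * Xq^(a*c) := by
            rw [← pow_add, ← pow_add]; congr 1; ring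
          linear_combination (qbinomF (i+1+a) (i+1) * qbinomF B c) * hp
        · rw [qb_eq_zero A (i+1) (by omega)]; ring
      rw [Finset.sum_range_succ'
        (fun u => Xq ^ ((A+1-u)*(N+1-u)) * qbinomF (A+1) u * qbinomF B (N+1-u)) (N+1)]
      rw [Finset.sum_congr rfl key, Finset.sum_add_distrib, ← Finset.mul_sum]
      rw [show A+1+B = (A+B)+1 by omega, qb_succ, IH N, IH (N+1)]
      rw [Finset.sum_range_succ'
        (fun u => Xq ^ ((A-u)*(N+1-u)) * qbinomF A u * qbinomF B (N+1-u)) (N+1)]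
      have hp : Xq^(N+1) * Xq^((A-0)*(N+1-0)) = Xq^((A+1-0)*(N+1-0)) := by
        rw [← pow_add]; congr 1; simp; ring
      simp only [qb_zero, Nat.sub_zero] at hp ⊢
      linear_combination (qbinomF B (N+1)) * hp

lemma hockey (A N : ℕ) :
    qbinomF (A+N+1) N = ∑ s ∈ range (N+1), Xq^s * qbinomF (A+s) s := by
  induction N with
  | zero => simp [qb_zero]
  | succ N IH =>
    rw [Finset.sum_range_succ, ← IH, show A+(N+1)+1 = (A+N+1)+1 by ring, qb_succ,
      show A+(N+1) = A+N+1 by ring]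

lemma vdmV (B A N : ℕ) :
    qbinomF (A+B+N+1) N
      = ∑ s ∈ range (N+1), Xq^(s*(B+1)) * qbinomF (A+s) s * qbinomF (B+N-s) (N-s) := by
  induction B generalizing N with
  | zero =>
    rw [show A+0+N+1 = A+N+1 by ring, hockey A N]
    apply Finset.sum_congr rfl
    intro s hs; simp only [mem_range] at hs
    rw [show 0+N-s = N-s by omega, qb_diag (N-s)]; norm_num
  | succ B IHB =>
    induction N with
    | zero => simp [qb_zero]
    | succ N IHN =>
      rw [Finset.sum_range_succ]
      have key : ∀ s ∈ range (N+1),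
          Xq^(s*(B+1+1)) * qbinomF (A+s) s * qbinomF (B+1+(N+1)-s) (N+1-s)
          = Xq^(s*(B+1+1)) * qbinomF (A+s) s * qbinomF (B+1+N-s) (N-s)
            + Xq^(N+1) * (Xq^(s*(B+1)) * qbinomF (A+s) s * qbinomF (B+(N+1)-s) (N+1-s)) := by
        intro s hs; simp only [mem_range] at hs
        obtain ⟨t, rfl⟩ : ∃ t, N = s + t := ⟨N-s, by omega⟩
        rw [show B+1+(s+t+1)-s = (B+1+(s+t)-s)+1 by omega,
            show s+t+1-s = ((s+t)-s)+1 by omega, qb_succ,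
            show B+(s+t+1)-s = B+1+(s+t)-s by omega,
            show s+t-s = t by omega, show B+1+(s+t)-s = B+t+1 by omega]
        have hp : Xq^(s*(B+1+1)) * Xq^(t+1) = Xq^(s+t+1) * Xq^(s*(B+1)) := by
          rw [← pow_add, ← pow_add]; congr 1; ring
        linear_combination (qbinomF (A+s) s * qbinomF (B+t+1) (t+1)) * hp
      rw [Finset.sum_congr rfl key, Finset.sum_add_distrib, ← Finset.mul_sum, ← IHN]
      have e1 := IHB (N+1)
      rw [Finset.sum_range_succ] at e1
      rw [show A+(B+1)+(N+1)+1 = (A+(B+1)+N+1)+1 by ring, qb_succ]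
      rw [show A+(B+1)+N+1 = A+B+(N+1)+1 by ring, e1]
      have hp2 : Xq^((N+1)*(B+1+1)) = Xq^(N+1) * Xq^((N+1)*(B+1)) := by
        rw [← pow_add]; congr 1; ring
      simp only [qb_zero, Nat.sub_self, show B+1+(N+1)-(N+1) = B+1 by omega,
        show B+(N+1)-(N+1) = B by omega]
      linear_combination (qbinomF (A+(N+1)) (N+1)) * hp2

lemma isum (m n k j : ℕ) (hjk : j ≤ k) :
    ∑ i ∈ Icc 1 n, Xq ^ (i*(j+m+1)) * qbinomF (i-1) (k-j) * qbinomF (m+n+j-i) (n-i)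
      = Xq ^ ((k-j+1)*(j+m+1)) * qbinomF (m+n+j) (m+k+1) := by
  rcases Nat.lt_or_ge (n+j) (k+1) with hnk | hnk
  · rw [Finset.sum_eq_zero, qb_eq_zero (m+n+j) (m+k+1) (by omega), mul_zero]
    intro i hi; simp only [mem_Icc] at hi
    rw [qb_eq_zero (i-1) (k-j) (by omega)]; ring
  · obtain ⟨N, hN⟩ : ∃ N, n + j = k + 1 + N := ⟨n+j-k-1, by omega⟩
    have h1 : qbinomF (m+n+j) (m+k+1) = qbinomF ((k-j)+(m+j)+N+1) N := by
      rw [show (k-j)+(m+j)+N+1 = m+n+j by omega,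
        qb_symm (show N ≤ m+n+j by omega), show m+n+j-N = m+k+1 by omega]
    rw [h1, vdmV, Finset.mul_sum]
    rw [← Finset.sum_subset (Finset.Icc_subset_Icc (by omega : 1 ≤ k-j+1) (le_refl n))
      (fun i hi his => by
        simp only [mem_Icc] at hi his
        rw [qb_eq_zero (i-1) (k-j) (by omega)]; ring)]
    rw [← Finset.Ico_add_one_right_eq_Icc, Finset.sum_Ico_eq_sum_range,
      show n+1-(k-j+1) = N+1 by omega]
    apply Finset.sum_congr rfl
    intro s hs; simp only [mem_range] at hs
    rw [show k-j+1+s-1 = k-j+s by omega,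
      qb_symm (show k-j ≤ k-j+s by omega), show k-j+s-(k-j) = s by omega,
      show m+n+j-(k-j+1+s) = m+j+N-s by omega,
      show n-(k-j+1+s) = N-s by omega]
    have hp : Xq ^ ((k-j+1+s)*(j+m+1)) = Xq ^ ((k-j+1)*(j+m+1)) * Xq ^ (s*(m+j+1)) := by
      rw [← pow_add]; congr 1; ring
    rw [hp]; ring

lemma claimB (m k r : ℕ) (hr : r ≤ m+k+1) :
    ∑ j ∈ range (k+1), Xq ^ ((k-j)*(m-j)) * qbinomF m j * qbinomF (k+1) (j+1) * qbinomF j (m+k+1-r)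
      = qbinomF m (m+k+1-r) * qbinomF r (m+1) := by
  set c := m+k+1-r with hc
  rcases Nat.lt_or_ge k c with hkc | hck
  · rw [qb_eq_zero r (m+1) (by omega), mul_zero]
    apply Finset.sum_eq_zero
    intro j hj; simp only [mem_range] at hj
    rw [qb_eq_zero j c (by omega)]; ring
  rcases Nat.lt_or_ge m c with hcm | hcm
  · rw [qb_eq_zero m c hcm, zero_mul]
    apply Finset.sum_eq_zero
    intro j hj; simp only [mem_range] at hj
    rcases Nat.lt_or_ge j c with h' | h'
    · rw [qb_eq_zero j c h']; ring
    · rw [qb_eq_zero m j (by omega)]; ring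
  · have hsplit := Finset.sum_range_add
      (fun j => Xq ^ ((k-j)*(m-j)) * qbinomF m j * qbinomF (k+1) (j+1) * qbinomF j c) c (k-c+1)
    rw [show c+(k-c+1) = k+1 by omega] at hsplit
    rw [hsplit]
    rw [Finset.sum_eq_zero (fun j hj => by
      simp only [mem_range] at hj
      rw [qb_eq_zero j c (by omega)]; ring), zero_add]
    have key : ∀ u ∈ range (k-c+1),
        Xq ^ ((k-(c+u))*(m-(c+u))) * qbinomF m (c+u) * qbinomF (k+1) (c+u+1) * qbinomF (c+u) c
        = qbinomF m c * (Xq ^ ((m-c-u)*((k-c)-u)) * qbinomF (m-c) u * qbinomF (k+1) ((k-c)-u)) := by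
      intro u hu; simp only [mem_range] at hu
      rcases Nat.lt_or_ge m (c+u) with h' | h'
      · rw [qb_eq_zero m (c+u) h', qb_eq_zero (m-c) u (by omega)]; ring
      · have htri := qb_trinom (show c ≤ c+u by omega) h'
        rw [show c+u-c = u by omega] at htri
        rw [qb_symm (show c+u+1 ≤ k+1 by omega), show k+1-(c+u+1) = (k-c)-u by omega]
        rw [show (k-(c+u))*(m-(c+u)) = (m-c-u)*((k-c)-u) by
          rw [show k-(c+u) = (k-c)-u by omega, show m-(c+u) = m-c-u by omega, Nat.mul_comm]]
        linear_combination (Xq ^ ((m-c-u)*((k-c)-u)) * qbinomF (k+1) ((k-c)-u)) * htri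
    rw [Finset.sum_congr rfl key, ← Finset.mul_sum]
    have hv := vdm (m-c) (k+1) (k-c)
    rw [show m-c+(k+1) = r by omega] at hv
    rw [← hv, qb_symm (show k-c ≤ r by omega), show r-(k-c) = m+1 by omega]

lemma lemP (m n k : ℕ) :
    ∑ j ∈ range (k+1), Xq ^ ((k-j)*(m-j)) * qbinomF m j * qbinomF (k+1) (j+1) * qbinomF (m+n+j+1) (m+k+1)
      = qbinomF (m+n) k * qbinomF (m+n+1) n := by
  have expand : ∀ j : ℕ, qbinomF (m+n+j+1) (m+k+1)
      = ∑ r ∈ range (m+k+2), Xq ^ ((m+n+1-r)*(m+k+1-r)) * qbinomF (m+n+1) r * qbinomF j (m+k+1-r) := by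
    intro j
    have h := vdm (m+n+1) j (m+k+1)
    rw [show m+n+1+j = m+n+j+1 by ring] at h
    exact h
  calc ∑ j ∈ range (k+1), Xq ^ ((k-j)*(m-j)) * qbinomF m j * qbinomF (k+1) (j+1) * qbinomF (m+n+j+1) (m+k+1)
      = ∑ r ∈ range (m+k+2), Xq ^ ((m+n+1-r)*(m+k+1-r)) * qbinomF (m+n+1) r *
          ∑ j ∈ range (k+1), Xq ^ ((k-j)*(m-j)) * qbinomF m j * qbinomF (k+1) (j+1) * qbinomF j (m+k+1-r) := by
        simp_rw [expand, Finset.mul_sum]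
        rw [Finset.sum_comm]
        apply Finset.sum_congr rfl; intro r _
        apply Finset.sum_congr rfl; intro j _; ring
    _ = ∑ r ∈ range (m+k+2), Xq ^ ((m+n+1-r)*(m+k+1-r)) * qbinomF (m+n+1) r *
          (qbinomF m (m+k+1-r) * qbinomF r (m+1)) := by
        apply Finset.sum_congr rfl; intro r hr; simp only [mem_range] at hr
        rw [claimB m k r (by omega)]
    _ = qbinomF (m+n) k * qbinomF (m+n+1) n := by
        have hsplit := Finset.sum_range_add
          (fun r => Xq ^ ((m+n+1-r)*(m+k+1-r)) * qbinomF (m+n+1) r *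
            (qbinomF m (m+k+1-r) * qbinomF r (m+1))) (m+1) (k+1)
        rw [show m+1+(k+1) = m+k+2 by ring] at hsplit
        rw [hsplit]
        rw [Finset.sum_eq_zero (fun r hr => by
          simp only [mem_range] at hr
          rw [qb_eq_zero r (m+1) (by omega)]; ring), zero_add]
        have key : ∀ v ∈ range (k+1),
            Xq ^ ((m+n+1-(m+1+v))*(m+k+1-(m+1+v))) * qbinomF (m+n+1) (m+1+v) *
              (qbinomF m (m+k+1-(m+1+v)) * qbinomF (m+1+v) (m+1))
            = qbinomF (m+n+1) (m+1) * (Xq ^ ((n-v)*(k-v)) * qbinomF n v * qbinomF m (k-v)) := by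
          intro v hv; simp only [mem_range] at hv
          rw [show m+n+1-(m+1+v) = n-v by omega, show m+k+1-(m+1+v) = k-v by omega]
          rcases Nat.lt_or_ge n v with h' | h'
          · rw [qb_eq_zero (m+n+1) (m+1+v) (by omega), qb_eq_zero n v (by omega)]; ring
          · have htri := qb_trinom (show m+1 ≤ m+1+v by omega) (show m+1+v ≤ m+n+1 by omega)
            rw [show m+1+v-(m+1) = v by omega, show m+n+1-(m+1) = n by omega] at htri
            linear_combination (Xq ^ ((n-v)*(k-v)) * qbinomF m (k-v)) * htri
        rw [Finset.sum_congr rfl key, ← Finset.mul_sum, ← vdm n m k,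
          qb_symm (show m+1 ≤ m+n+1 by omega), show m+n+1-(m+1) = n by omega,
          show n+m = m+n by ring]
        ring

lemma inner_sum (m n k j : ℕ) (h1 : 1 ≤ j) (h2 : j ≤ k) :
    ∑ i ∈ Icc 1 n,
        (RatFunc.X : RatFunc ℚ) ^ ((i : ℤ) * ((j : ℤ) + m + 1) - 2 * j * ((k : ℤ) - j + 1)) *
          qbinomF m (j - 1) * qbinomF (k + 1) j * qbinomF (i - 1) (k - j) *
          qbinomF (m + n + j - i) (n - i)
      = Xq ^ (((k:ℤ)-j+1)*((m:ℤ)+1-j)) * qbinomF m (j-1) * qbinomF (k+1) j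
          * qbinomF (m+n+j) (m+k+1) := by
  obtain ⟨d, rfl⟩ : ∃ d, k = j + d := ⟨k-j, by omega⟩
  have hXb : (Xq : RatFunc ℚ) ^ (2*j*(d+1)) ≠ 0 := pow_ne_zero _ Xq_ne_zero
  have hterm : ∀ i : ℕ,
      (RatFunc.X : RatFunc ℚ) ^ ((i : ℤ) * ((j : ℤ) + m + 1) - 2 * j * (((j+d : ℕ) : ℤ) - j + 1))
        = Xq ^ (i*(j+m+1)) / Xq ^ (2*j*(d+1)) := by
    intro i
    rw [div_eq_mul_inv, ← zpow_natCast Xq (i*(j+m+1)), ← zpow_natCast Xq (2*j*(d+1)),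
      ← zpow_neg, ← zpow_add₀ Xq_ne_zero]
    congr 1
    push_cast
    ring
  have hpull : ∑ i ∈ Icc 1 n,
        (RatFunc.X : RatFunc ℚ) ^ ((i : ℤ) * ((j : ℤ) + m + 1) - 2 * j * (((j+d:ℕ) : ℤ) - j + 1)) *
          qbinomF m (j - 1) * qbinomF (j + d + 1) j * qbinomF (i - 1) (j + d - j) *
          qbinomF (m + n + j - i) (n - i)
      = (qbinomF m (j-1) * qbinomF (j+d+1) j / Xq ^ (2*j*(d+1))) *
          ∑ i ∈ Icc 1 n, Xq ^ (i*(j+m+1)) * qbinomF (i-1) (j+d-j) * qbinomF (m+n+j-i) (n-i) := by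
    rw [Finset.mul_sum]
    apply Finset.sum_congr rfl
    intro i _
    rw [hterm i]
    ring
  rw [hpull, isum m n (j+d) j (by omega)]
  have hc2 : Xq ^ ((((j+d:ℕ):ℤ) - (j:ℤ) + 1) * ((m:ℤ)+1-(j:ℤ)))
      = Xq ^ ((j+d-j+1)*(j+m+1)) / Xq ^ (2*j*(d+1)) := by
    rw [eq_div_iff hXb, ← zpow_natCast Xq ((j+d-j+1)*(j+m+1)),
      ← zpow_natCast Xq (2*j*(d+1)), ← zpow_add₀ Xq_ne_zero]
    congr 1
    rw [show j+d-j+1 = d+1 by omega]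
    push_cast
    ring
  rw [hc2]
  ring

end QBaux

theorem qbinom_identity (m n k : ℕ) :
    qbinomF (m + n) k * qbinomF (m + n + 1) n - qbinomF m k * qbinomF (k + m + n + 1) n =
      ∑ i ∈ Icc 1 n, ∑ j ∈ Icc 1 k,
        (RatFunc.X : RatFunc ℚ) ^ ((i : ℤ) * ((j : ℤ) + m + 1) - 2 * j * ((k : ℤ) - j + 1)) *
          qbinomF m (j - 1) * qbinomF (k + 1) j * qbinomF (i - 1) (k - j) *
          qbinomF (m + n + j - i) (n - i) := by
  rw [Finset.sum_comm]
  have hstep : ∑ j ∈ Icc 1 k, ∑ i ∈ Icc 1 n,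
        (RatFunc.X : RatFunc ℚ) ^ ((i : ℤ) * ((j : ℤ) + m + 1) - 2 * j * ((k : ℤ) - j + 1)) *
          qbinomF m (j - 1) * qbinomF (k + 1) j * qbinomF (i - 1) (k - j) *
          qbinomF (m + n + j - i) (n - i)
      = ∑ j' ∈ range k, (RatFunc.X : RatFunc ℚ) ^ ((k-j')*(m-j')) * qbinomF m j' *
          qbinomF (k+1) (j'+1) * qbinomF (m+n+j'+1) (m+k+1) := by
    rw [← Finset.Ico_add_one_right_eq_Icc, Finset.sum_Ico_eq_sum_range, show k+1-1 = k by omega]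
    apply Finset.sum_congr rfl
    intro j' hj'; simp only [mem_range] at hj'
    rw [QBaux.inner_sum m n k (1+j') (by omega) (by omega)]
    rw [show (1:ℕ)+j'-1 = j' by omega, show m+n+(1+j') = m+n+j'+1 by ring,
      show 1+j' = j'+1 by ring]
    rcases Nat.lt_or_ge m j' with h' | h'
    · rw [QBaux.qb_eq_zero m j' (by omega)]; ring
    · have hx : (RatFunc.X : RatFunc ℚ) ^ (((k:ℤ)-((j'+1:ℕ):ℤ)+1)*((m:ℤ)+1-((j'+1:ℕ):ℤ)))
          = (RatFunc.X : RatFunc ℚ) ^ ((k-j')*(m-j')) := by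
        obtain ⟨b, rfl⟩ : ∃ b, k = j'+1+b := ⟨k-j'-1, by omega⟩
        obtain ⟨a, rfl⟩ : ∃ a, m = j'+a := ⟨m-j', by omega⟩
        rw [← zpow_natCast (RatFunc.X : RatFunc ℚ) ((j'+1+b-j')*(j'+a-j')), show j'+1+b-j' = b+1 by omega,
          show j'+a-j' = a by omega]
        congr 1
        push_cast
        ring
      rw [hx]
  rw [hstep]
  have hP := QBaux.lemP m n k
  rw [Finset.sum_range_succ] at hP
  rw [QBaux.qb_symm (show m+k+1 ≤ m+n+k+1 by omega), show m+n+k+1-(m+k+1) = n by omega,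
    show m+n+k+1 = k+m+n+1 by ring, Nat.sub_self, QBaux.qb_diag] at hP
  simp only [Nat.zero_mul, pow_zero, one_mul, mul_one] at hP
  linear_combination -hP
end

section
/- Let R be a commutative ring and α, β, r ∈ R. For all integers m, n ≥ 0 and every integer k: S(m+n,k;α,β,r) = Σ_{i=0}^{n} Σ_{j=0}^{m} C(n,i) · S(m,j;α,β,r) · S(i,k-j;α,β,r) · ∏_{ℓ=0}^{n-i-1} ((m+ℓ)·α + j·β), where C(n,i) is the binomial coefficient and integer multiples (m+ℓ)·α, j·β are taken in R. -/
open Finset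

/-- The generalized Stirling numbers of Hsu and Shiue, with values in a commutative
ring `R`: `HS α β r 0 0 = 1`, `HS α β r n k = 0` for `k < 0` or `k > n`, and
`HS α β r n k = HS α β r (n-1) (k-1) + (α(n-1) + βk + r) * HS α β r (n-1) k` otherwise. -/
def HS {R : Type*} [CommRing R] (α β r : R) : ℕ → ℤ → R
  | 0, k => if k = 0 then 1 else 0
  | n + 1, k =>
      if k < 0 ∨ ((n : ℤ) + 1) < k then 0
      else HS α β r n (k - 1) + (α * (n : R) + β * (k : R) + r) * HS α β r n k

lemma HS_vanish {R : Type*} [CommRing R] (α β r : R) (n : ℕ) (k : ℤ)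
    (h : k < 0 ∨ (n : ℤ) < k) : HS α β r n k = 0 := by
  cases n with
  | zero =>
    have : k ≠ 0 := by omega
    simp [HS, this]
  | succ n =>
    have h' : k < 0 ∨ ((n : ℤ) + 1) < k := by push_cast at h; omega
    simp [HS, h']

lemma HS_succ {R : Type*} [CommRing R] (α β r : R) (n : ℕ) (k : ℤ) :
    HS α β r (n + 1) k =
      HS α β r n (k - 1) + (α * (n : R) + β * (k : R) + r) * HS α β r n k := by
  by_cases h : k < 0 ∨ ((n : ℤ) + 1) < k
  · have h1 : HS α β r n (k - 1) = 0 := HS_vanish _ _ _ _ _ (by omega)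
    have h2 : HS α β r n k = 0 := HS_vanish _ _ _ _ _ (by omega)
    simp [HS, h, h1, h2]
  · simp [HS, h]

theorem HS_add {R : Type*} [CommRing R] (α β r : R) (m n : ℕ) (k : ℤ) :
    HS α β r (m + n) k =
      ∑ i ∈ range (n + 1), ∑ j ∈ range (m + 1),
        (n.choose i : R) * HS α β r m (j : ℤ) * HS α β r i (k - j) *
          ∏ ℓ ∈ range (n - i), (((m + ℓ : ℕ) : R) * α + (j : R) * β) := by
  induction n generalizing k with
  | zero =>
    simp only [Nat.add_zero, zero_add, sum_range_one, Nat.choose_self, Nat.cast_one, one_mul,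
      Nat.zero_sub, range_zero, prod_empty, mul_one]
    by_cases h : 0 ≤ k ∧ k ≤ (m : ℤ)
    · obtain ⟨h0, h1⟩ := h
      rw [Finset.sum_eq_single k.toNat]
      · simp [HS, Int.toNat_of_nonneg h0]
      · intro j hj hne
        have : k - (j:ℤ) ≠ 0 := by
          intro hc; apply hne; omega
        simp [HS, this]
      · intro hk
        exfalso; apply hk; simp [mem_range]; omega
    · rw [HS_vanish α β r m k (by omega), Finset.sum_eq_zero]
      intro j hj
      simp only [mem_range] at hj
      have : k - (j:ℤ) ≠ 0 := by omega
      simp [HS, this]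
  | succ n ih =>
    have hrw : m + (n + 1) = (m + n) + 1 := rfl
    rw [hrw, HS_succ, ih, ih]
    -- abbreviations
    -- LHS = Σ_i Σ_j T(i,j,k-1) + c * Σ_i Σ_j T(i,j,k)
    calc
      (∑ i ∈ range (n + 1), ∑ j ∈ range (m + 1),
          (n.choose i : R) * HS α β r m (j : ℤ) * HS α β r i (k - 1 - j) *
            ∏ ℓ ∈ range (n - i), (((m + ℓ : ℕ) : R) * α + (j : R) * β)) +
        (α * ((m + n : ℕ) : R) + β * (k : R) + r) *
          ∑ i ∈ range (n + 1), ∑ j ∈ range (m + 1),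
            (n.choose i : R) * HS α β r m (j : ℤ) * HS α β r i (k - j) *
              ∏ ℓ ∈ range (n - i), (((m + ℓ : ℕ) : R) * α + (j : R) * β)
        = ∑ i ∈ range (n + 1), ∑ j ∈ range (m + 1),
            ((n.choose i : R) * HS α β r m (j : ℤ) * HS α β r (i + 1) (k - j) *
              ∏ ℓ ∈ range (n - i), (((m + ℓ : ℕ) : R) * α + (j : R) * β) +
            (n.choose i : R) * HS α β r m (j : ℤ) * HS α β r i (k - j) *
              ∏ ℓ ∈ range (n + 1 - i), (((m + ℓ : ℕ) : R) * α + (j : R) * β)) := by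
          rw [Finset.mul_sum, ← Finset.sum_add_distrib]
          refine Finset.sum_congr rfl fun i hi => ?_
          rw [Finset.mul_sum, ← Finset.sum_add_distrib]
          refine Finset.sum_congr rfl fun j hj => ?_
          simp only [mem_range] at hi hj
          have hi' : i ≤ n := by omega
          have hsub : n + 1 - i = (n - i) + 1 := by omega
          rw [hsub, Finset.prod_range_succ, HS_succ]
          have hc1 : k - 1 - (j : ℤ) = (k - j) - 1 := by ring
          have hc2 : ((m + (n - i) : ℕ) : R) = (m : R) + (n : R) - (i : R) := by
            push_cast [Nat.cast_sub hi']
            ring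
          have hc3 : ((m + n : ℕ) : R) = (m : R) + (n : R) := by push_cast; ring
          rw [hc1]
          push_cast [Nat.cast_sub hi']
          ring
      _ = ∑ i ∈ range (n + 1 + 1), ∑ j ∈ range (m + 1),
            ((n + 1).choose i : R) * HS α β r m (j : ℤ) * HS α β r i (k - j) *
              ∏ ℓ ∈ range (n + 1 - i), (((m + ℓ : ℕ) : R) * α + (j : R) * β) := by
          simp only [Finset.sum_add_distrib]
          rw [Finset.sum_range_succ' (fun i => ∑ j ∈ range (m + 1),
            ((n + 1).choose i : R) * HS α β r m (j : ℤ) * HS α β r i (k - j) *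
              ∏ ℓ ∈ range (n + 1 - i), (((m + ℓ : ℕ) : R) * α + (j : R) * β))]
          -- RHS now: Σ_{i<n+1} f(i+1) + f 0
          have pascal : ∀ i ∈ range (n + 1), (∑ j ∈ range (m + 1),
              ((n + 1).choose (i + 1) : R) * HS α β r m (j : ℤ) * HS α β r (i+1) (k - j) *
                ∏ ℓ ∈ range (n + 1 - (i + 1)), (((m + ℓ : ℕ) : R) * α + (j : R) * β))
              = (∑ j ∈ range (m + 1),
                  (n.choose i : R) * HS α β r m (j : ℤ) * HS α β r (i+1) (k - j) *
                    ∏ ℓ ∈ range (n - i), (((m + ℓ : ℕ) : R) * α + (j : R) * β)) +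
                (∑ j ∈ range (m + 1),
                  (n.choose (i+1) : R) * HS α β r m (j : ℤ) * HS α β r (i+1) (k - j) *
                    ∏ ℓ ∈ range (n - i), (((m + ℓ : ℕ) : R) * α + (j : R) * β)) := by
            intro i hi
            rw [← Finset.sum_add_distrib]
            refine Finset.sum_congr rfl fun j hj => ?_
            have : n + 1 - (i + 1) = n - i := by omega
            rw [this, Nat.choose_succ_succ]
            push_cast
            ring
          rw [Finset.sum_congr rfl pascal, Finset.sum_add_distrib]
          -- RHS = (A + C) + f0; reassociate so congr leaves B = C + f0.
          rw [add_assoc]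
          congr 1
          rw [Finset.sum_range_succ' (fun i => ∑ j ∈ range (m + 1),
            (n.choose i : R) * HS α β r m (j : ℤ) * HS α β r i (k - j) *
              ∏ ℓ ∈ range (n + 1 - i), (((m + ℓ : ℕ) : R) * α + (j : R) * β))]
          -- LHS(B) = Σ_{i<n} b(i+1) + b 0 ; RHS = Σ_{i<n+1} c i + f 0
          rw [Finset.sum_range_succ (fun i => ∑ j ∈ range (m + 1),
            (n.choose (i+1) : R) * HS α β r m (j : ℤ) * HS α β r (i+1) (k - j) *
              ∏ ℓ ∈ range (n - i), (((m + ℓ : ℕ) : R) * α + (j : R) * β))]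
          have hlast : (∑ j ∈ range (m + 1),
              (n.choose (n+1) : R) * HS α β r m (j : ℤ) * HS α β r (n+1) (k - j) *
                ∏ ℓ ∈ range (n - n), (((m + ℓ : ℕ) : R) * α + (j : R) * β)) = 0 := by
            apply Finset.sum_eq_zero
            intro j hj
            simp [Nat.choose_succ_self]
          rw [hlast, add_zero]
          congr 1
          · refine Finset.sum_congr rfl fun i hi => ?_
            refine Finset.sum_congr rfl fun j hj => ?_
            have : n + 1 - (i + 1) = n - i := by omega
            rw [this]
          · refine Finset.sum_congr rfl fun j hj => ?_
            simp
end
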